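/- The PF-D0 coefficient function b5 satisfies lim_{v→0⁺} b5(v) = 50277247/985600 and lim_{v→0⁺} (b5(v) − 50277247/985600)/v² = −16301796103/1383782400; in particular b5 tends to the corresponding coefficient of the classical Quinlan–Tremaine method as v → 0. -/

import Mathlib

open Filter

/-- The variable coefficient `b₁(v)` of the phase-fitted method PF-D0. -/
noncomputable def pfb1 (v : ℝ) : ℝ :=
  (((-124184636) * Real.cos v + 70378348 * Real.cos (2 * v) - 24862148 * Real.cos (3 * v)
        + 5153611 * Real.cos (4 * v)) * v ^ 2
      + 25 * (3013169 * v ^ 2 - 16128 * Real.cos (3 * v) + 32256 * Real.cos (4 * v)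
        - 32256 * Real.cos (5 * v) + 16128 * Real.cos (6 * v)))
    / (206438400 * v ^ 2 * (Real.sin (v / 2)) ^ 10)

/-- The variable coefficient `b₂(v)` of the phase-fitted method PF-D0. -/
noncomputable def pfb2 (v : ℝ) : ℝ :=
  (v ^ 2 * (159588050 * Real.cos v - 85350160 * Real.cos (2 * v)
        + 16708985 * Real.cos (3 * v) - 5153611 * Real.cos (5 * v))
      - 16 * (6496079 * v ^ 2 - 252000 * Real.cos (3 * v) + 504000 * Real.cos (4 * v)
        - 504000 * Real.cos (5 * v) + 252000 * Real.cos (6 * v)))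
    / (206438400 * v ^ 2 * (Real.sin (v / 2)) ^ 10)

/-- The variable coefficient `b₃(v)` of the phase-fitted method PF-D0. -/
noncomputable def pfb3 (v : ℝ) : ℝ :=
  (((-367257540) * Real.cos v + 183567900 * Real.cos (2 * v)
        - 16708985 * Real.cos (4 * v) + 24862148 * Real.cos (5 * v)) * v ^ 2
      + 81 * (3175117 * v ^ 2 - 224000 * Real.cos (3 * v) + 448000 * Real.cos (4 * v)
        - 448000 * Real.cos (5 * v) + 224000 * Real.cos (6 * v)))
    / (206438400 * v ^ 2 * (Real.sin (v / 2)) ^ 10)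

/-- The variable coefficient `b₄(v)` of the phase-fitted method PF-D0. -/
noncomputable def pfb4 (v : ℝ) : ℝ :=
  (30675810 * v ^ 2 * Real.cos v - 42958788 * v ^ 2
      + 75 * (161280 - 611893 * v ^ 2) * Real.cos (3 * v)
      + 140 * (152411 * v ^ 2 - 172800) * Real.cos (4 * v)
      + (24192000 - 17594587 * v ^ 2) * Real.cos (5 * v)
      - 12096000 * Real.cos (6 * v))
    / (51609600 * v ^ 2 * (Real.sin (v / 2)) ^ 10)

/-- The variable coefficient `b₅(v)` of the phase-fitted method PF-D0. -/
noncomputable def pfb5 (v : ℝ) : ℝ :=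
  ((-61351620) * v ^ 2 * Real.cos (2 * v) + 85936557 * v ^ 2
      + 30 * (6120959 * v ^ 2 - 1411200) * Real.cos (3 * v)
      + 25 * (3386880 - 3191761 * v ^ 2) * Real.cos (4 * v)
      + (62092318 * v ^ 2 - 84672000) * Real.cos (5 * v)
      + 42336000 * Real.cos (6 * v))
    / (103219200 * v ^ 2 * (Real.sin (v / 2)) ^ 10)

/-- The variable coefficient `b₆(v)` of the phase-fitted method PF-D0. -/
noncomputable def pfb6 (v : ℝ) : ℝ :=
  (((-171873114) * Real.cos v + 171835152 * Real.cos (2 * v)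
        - 257184477 * Real.cos (3 * v) + 103937264 * Real.cos (4 * v)
        - 75329225 * Real.cos (5 * v)) * v ^ 2
      + 50803200 * (Real.cos (3 * v) - 2 * Real.cos (4 * v)
        + 2 * Real.cos (5 * v) - Real.cos (6 * v)))
    / (103219200 * v ^ 2 * (Real.sin (v / 2)) ^ 10)


open Filter Set

noncomputable def Tm (A B C D E F k : ℝ) (v : ℝ) : ℝ :=
  (A + B*v + C*v^2) * Real.cos (k*v) + (D + E*v + F*v^2) * Real.sin (k*v)

lemma Tm_hasDerivAt (A B C D E F k x A' B' C' D' E' F' : ℝ)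
    (hA : A' = B + k*D) (hB : B' = 2*C + k*E) (hC : C' = k*F)
    (hD : D' = E - k*A) (hE : E' = 2*F - k*B) (hF : F' = -(k*C)) :
    HasDerivAt (fun v => Tm A B C D E F k v) (Tm A' B' C' D' E' F' k x) x := by
  have hk : HasDerivAt (fun v : ℝ => k*v) k x := by
    simpa using (hasDerivAt_id x).const_mul k
  have hc : HasDerivAt (fun v : ℝ => Real.cos (k*v)) (-Real.sin (k*x) * k) x :=
    (Real.hasDerivAt_cos (k*x)).comp x hk
  have hs : HasDerivAt (fun v : ℝ => Real.sin (k*v)) (Real.cos (k*x) * k) x :=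
    (Real.hasDerivAt_sin (k*x)).comp x hk
  have hsq : HasDerivAt (fun v : ℝ => v^2) (2*x) x := by
    simpa using hasDerivAt_pow 2 x
  have hp : HasDerivAt (fun v : ℝ => A + B*v + C*v^2) (B + C*(2*x)) x := by
    have h := ((hasDerivAt_id' (x := x)).const_mul B |>.const_add A).add (hsq.const_mul C)
    simp only [mul_one] at h; exact h
  have hq : HasDerivAt (fun v : ℝ => D + E*v + F*v^2) (E + F*(2*x)) x := by
    have h := ((hasDerivAt_id' (x := x)).const_mul E |>.const_add D).add (hsq.const_mul F)
    simp only [mul_one] at h; exact h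
  have hmain := (hp.mul hc).add (hq.mul hs)
  have heq : Tm A' B' C' D' E' F' k x =
      (B + C*(2*x)) * Real.cos (k*x) + (A + B*x + C*x^2) * (-Real.sin (k*x) * k)
      + ((E + F*(2*x)) * Real.sin (k*x) + (D + E*x + F*x^2) * (Real.cos (k*x) * k)) := by
    subst hA hB hC hD hE hF; unfold Tm; ring
  rw [heq]
  exact hmain

lemma Tm_continuous (A B C D E F k : ℝ) : Continuous (fun v => Tm A B C D E F k v) := by
  unfold Tm; fun_prop

lemma cos5_eq (v : ℝ) :
    Real.cos (5*v) = 16*Real.cos v^5 - 20*Real.cos v^3 + 5*Real.cos v := by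
  rw [show (5:ℝ)*v = 2*v + 3*v by ring, Real.cos_add, Real.cos_two_mul, Real.cos_three_mul,
    Real.sin_two_mul, Real.sin_three_mul]
  linear_combination (8*Real.sin v^2*Real.cos v - 8*Real.cos v^3 + 2*Real.cos v) *
    (Real.sin_sq_add_cos_sq v)

lemma keyident (v : ℝ) :
    126 - 210*Real.cos v + 120*Real.cos (2*v) - 45*Real.cos (3*v) + 10*Real.cos (4*v)
      - Real.cos (5*v) = 512 * Real.sin (v/2)^10 := by
  have h1 : Real.cos v = 1 - 2*Real.sin (v/2)^2 := by
    conv_lhs => rw [show v = 2*(v/2) by ring]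
    rw [Real.cos_two_mul']
    linear_combination Real.sin_sq_add_cos_sq (v/2)
  have h4 : Real.cos (4*v) = 2*Real.cos (2*v)^2 - 1 := by
    rw [show (4:ℝ)*v = 2*(2*v) by ring, Real.cos_two_mul]
  rw [cos5_eq, h4, Real.cos_two_mul, Real.cos_three_mul, h1]
  ring

lemma sinc_half : Tendsto (fun v : ℝ => Real.sin (v/2) / v) (nhdsWithin 0 (Set.Ioi 0))
    (nhds (1/2)) := by
  have h : HasDerivAt Real.sin 1 0 := by simpa using Real.hasDerivAt_sin 0
  rw [hasDerivAt_iff_tendsto_slope] at h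
  have hmap : Tendsto (fun v : ℝ => v/2) (nhdsWithin 0 (Set.Ioi 0))
      (nhdsWithin 0 {(0:ℝ)}ᶜ) := by
    apply tendsto_nhdsWithin_of_tendsto_nhds_of_eventually_within
    · have : Tendsto (fun v : ℝ => v/2) (nhds 0) (nhds 0) := by
        simpa using (continuous_id.div_const (2:ℝ)).tendsto 0
      exact this.mono_left nhdsWithin_le_nhds
    · filter_upwards [self_mem_nhdsWithin] with x hx
      have hx' : (0:ℝ) < x := hx
      simp only [Set.mem_compl_iff, Set.mem_singleton_iff]
      positivity
  have h2 : Tendsto (fun v : ℝ => Real.sin (v/2) / (v/2)) (nhdsWithin 0 (Set.Ioi 0))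
      (nhds 1) := by
    have hcomp := h.comp hmap
    refine hcomp.congr fun x => ?_
    simp [slope_def_field, div_eq_div_iff]
  have h3 := h2.div_const 2
  refine h3.congr fun x => ?_
  rw [div_div, show x/2*2 = x by ring]

noncomputable def fN0 (v : ℝ) : ℝ :=
  Tm 0 0 85936557 0 0 0 0 v
  + Tm 0 0 0 0 0 0 1 v
  + Tm 0 0 (-61351620) 0 0 0 2 v
  + Tm (-42336000) 0 183628770 0 0 0 3 v
  + Tm 84672000 0 (-79794025) 0 0 0 4 v
  + Tm (-84672000) 0 62092318 0 0 0 5 v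
  + Tm 42336000 0 0 0 0 0 6 v

noncomputable def fN1 (v : ℝ) : ℝ :=
  Tm 0 171873114 0 0 0 0 0 v
  + Tm 0 0 0 0 0 0 1 v
  + Tm 0 (-122703240) 0 0 0 122703240 2 v
  + Tm 0 367257540 0 127008000 0 (-550886310) 3 v
  + Tm 0 (-159588050) 0 (-338688000) 0 319176100 4 v
  + Tm 0 124184636 0 423360000 0 (-310461590) 5 v
  + Tm 0 0 0 (-254016000) 0 0 6 v

noncomputable def fN2 (v : ℝ) : ℝ :=
  Tm 171873114 0 0 0 0 0 0 v
  + Tm 0 0 0 0 0 0 1 v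
  + Tm (-122703240) 0 245406480 0 490812960 0 2 v
  + Tm 748281540 0 (-1652658930) 0 (-2203545240) 0 3 v
  + Tm (-1514340050) 0 1276704400 0 1276704400 0 4 v
  + Tm 2240984636 0 (-1552307950) 0 (-1241846360) 0 5 v
  + Tm (-1524096000) 0 0 0 0 0 6 v

noncomputable def fN3 (v : ℝ) : ℝ :=
  Tm 0 0 0 0 0 0 0 v
  + Tm 0 0 0 0 0 0 1 v
  + Tm 0 1472438880 0 736219440 0 (-490812960) 2 v
  + Tm 0 (-9915953580) 0 (-4448389860) 0 4957976790 3 v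
  + Tm 0 7660226400 0 7334064600 0 (-5106817600) 4 v
  + Tm 0 (-9313847700) 0 (-12446769540) 0 7761539750 5 v
  + Tm 0 0 0 9144576000 0 0 6 v

noncomputable def fN4 (v : ℝ) : ℝ :=
  Tm 0 0 0 0 0 0 0 v
  + Tm 0 0 0 0 0 0 1 v
  + Tm 2944877760 0 (-981625920) 0 (-3926503680) 0 2 v
  + Tm (-23261123160) 0 14873930370 0 39663814320 0 3 v
  + Tm 36996484800 0 (-20427270400) 0 (-40854540800) 0 4 v
  + Tm (-71547695400) 0 38807698750 0 62092318000 0 5 v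
  + Tm 54867456000 0 0 0 0 0 6 v

noncomputable def fN5 (v : ℝ) : ℝ :=
  Tm 0 0 0 0 0 0 0 v
  + Tm 0 0 0 0 0 0 1 v
  + Tm 0 (-9816259200) 0 (-9816259200) 0 1963251840 2 v
  + Tm 0 148739303700 0 109447183800 0 (-44621791110) 3 v
  + Tm 0 (-204272704000) 0 (-188840480000) 0 81709081600 4 v
  + Tm 0 388076987500 0 419830795000 0 (-194038493750) 5 v
  + Tm 0 0 0 (-329204736000) 0 0 6 v

noncomputable def fN6 (v : ℝ) : ℝ :=
  Tm 0 0 0 0 0 0 0 v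
  + Tm 0 0 0 0 0 0 1 v
  + Tm (-29448777600) 0 3926503680 0 23559022080 0 2 v
  + Tm 477080855100 0 (-133865373330) 0 (-535461493320) 0 3 v
  + Tm (-959634624000) 0 326836326400 0 980508979200 0 4 v
  + Tm 2487230962500 0 (-970192468750) 0 (-2328461925000) 0 5 v
  + Tm (-1975228416000) 0 0 0 0 0 6 v

noncomputable def fN7 (v : ℝ) : ℝ :=
  Tm 0 0 0 0 0 0 0 v
  + Tm 0 0 0 0 0 0 1 v
  + Tm 0 54971051520 0 82456577280 0 (-7853007360) 2 v
  + Tm 0 (-1874115226620) 0 (-1966704058620) 0 401596119990 3 v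
  + Tm 0 4575708569600 0 4819047475200 0 (-1307345305600) 4 v
  + Tm 0 (-13582694562500) 0 (-14764616737500) 0 4850962343750 5 v
  + Tm 0 0 0 11851370496000 0 0 6 v

noncomputable def fN8 (v : ℝ) : ℝ :=
  Tm 0 0 0 0 0 0 0 v
  + Tm 0 0 0 0 0 0 1 v
  + Tm 219884206080 0 (-15706014720) 0 (-125648117760) 0 2 v
  + Tm (-7774227402480) 0 1204788359970 0 6425537919840 0 3 v
  + Tm 23851898470400 0 (-5229381222400) 0 (-20917524889600) 0 4 v
  + Tm (-87405778250000) 0 24254811718750 0 77615397500000 0 5 v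
  + Tm 71108222976000 0 0 0 0 0 6 v

noncomputable def fN9 (v : ℝ) : ℝ :=
  Tm 0 0 0 0 0 0 0 v
  + Tm 0 0 0 0 0 0 1 v
  + Tm 0 (-282708264960) 0 (-565416529920) 0 31412029440 2 v
  + Tm 0 21686190479460 0 29748220127280 0 (-3614365079910) 3 v
  + Tm 0 (-94128862003200) 0 (-116325118771200) 0 20917524889600 4 v
  + Tm 0 436586610937500 0 514644288750000 0 (-121274058593750) 5 v
  + Tm 0 0 0 (-426649337856000) 0 0 6 v

noncomputable def fN10 (v : ℝ) : ℝ :=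
  Tm 0 0 0 0 0 0 0 v
  + Tm 0 0 0 0 0 0 1 v
  + Tm (-1413541324800) 0 62824058880 0 628240588800 0 2 v
  + Tm 110930850861300 0 (-10843095239730) 0 (-72287301598200) 0 3 v
  + Tm (-559429337088000) 0 83670099558400 0 418350497792000 0 4 v
  + Tm 3009808054687500 0 (-606370292968750) 0 (-2425481171875000) 0 5 v
  + Tm (-2559896027136000) 0 0 0 0 0 6 v

noncomputable def fN11 (v : ℝ) : ℝ :=
  Tm 0 0 0 0 0 0 0 v
  + Tm 0 0 0 0 0 0 1 v
  + Tm 0 1382129295360 0 3455323238400 0 (-125648117760) 2 v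
  + Tm 0 (-238548095274060) 0 (-405079854182100) 0 32529285719190 3 v
  + Tm 0 1840742190284800 0 2656067846144000 0 (-334680398233600) 4 v
  + Tm 0 (-13340146445312500) 0 (-17474521445312500) 0 3031851464843750 5 v
  + Tm 0 0 0 15359376162816000 0 0 6 v

noncomputable def fN12 (v : ℝ) : ℝ :=
  Tm 0 0 0 0 0 0 0 v
  + Tm 0 0 0 0 0 0 1 v
  + Tm 8292775772160 0 (-251296235520) 0 (-3015554826240) 0 2 v
  + Tm (-1453787657820360) 0 97587857157570 0 780702857260560 0 3 v
  + Tm 12465013574860800 0 (-1338721592934400) 0 (-8032329557606400) 0 4 v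
  + Tm (-100712753671875000) 0 15159257324218750 0 72764435156250000 0 5 v
  + Tm 92156256976896000 0 0 0 0 0 6 v

lemma fN0_deriv (x : ℝ) : HasDerivAt fN0 (fN1 x) x := by
  unfold fN0 fN1
  exact ((((((Tm_hasDerivAt 0 0 85936557 0 0 0 0 x 0 171873114 0 0 0 0 (by norm_num) (by norm_num) (by norm_num) (by norm_num) (by norm_num) (by norm_num)).add
    (Tm_hasDerivAt 0 0 0 0 0 0 1 x 0 0 0 0 0 0 (by norm_num) (by norm_num) (by norm_num) (by norm_num) (by norm_num) (by norm_num))).add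
    (Tm_hasDerivAt 0 0 (-61351620) 0 0 0 2 x 0 (-122703240) 0 0 0 122703240 (by norm_num) (by norm_num) (by norm_num) (by norm_num) (by norm_num) (by norm_num))).add
    (Tm_hasDerivAt (-42336000) 0 183628770 0 0 0 3 x 0 367257540 0 127008000 0 (-550886310) (by norm_num) (by norm_num) (by norm_num) (by norm_num) (by norm_num) (by norm_num))).add
    (Tm_hasDerivAt 84672000 0 (-79794025) 0 0 0 4 x 0 (-159588050) 0 (-338688000) 0 319176100 (by norm_num) (by norm_num) (by norm_num) (by norm_num) (by norm_num) (by norm_num))).add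
    (Tm_hasDerivAt (-84672000) 0 62092318 0 0 0 5 x 0 124184636 0 423360000 0 (-310461590) (by norm_num) (by norm_num) (by norm_num) (by norm_num) (by norm_num) (by norm_num))).add
    (Tm_hasDerivAt 42336000 0 0 0 0 0 6 x 0 0 0 (-254016000) 0 0 (by norm_num) (by norm_num) (by norm_num) (by norm_num) (by norm_num) (by norm_num))

lemma fN1_deriv (x : ℝ) : HasDerivAt fN1 (fN2 x) x := by
  unfold fN1 fN2
  exact ((((((Tm_hasDerivAt 0 171873114 0 0 0 0 0 x 171873114 0 0 0 0 0 (by norm_num) (by norm_num) (by norm_num) (by norm_num) (by norm_num) (by norm_num)).add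
    (Tm_hasDerivAt 0 0 0 0 0 0 1 x 0 0 0 0 0 0 (by norm_num) (by norm_num) (by norm_num) (by norm_num) (by norm_num) (by norm_num))).add
    (Tm_hasDerivAt 0 (-122703240) 0 0 0 122703240 2 x (-122703240) 0 245406480 0 490812960 0 (by norm_num) (by norm_num) (by norm_num) (by norm_num) (by norm_num) (by norm_num))).add
    (Tm_hasDerivAt 0 367257540 0 127008000 0 (-550886310) 3 x 748281540 0 (-1652658930) 0 (-2203545240) 0 (by norm_num) (by norm_num) (by norm_num) (by norm_num) (by norm_num) (by norm_num))).add
    (Tm_hasDerivAt 0 (-159588050) 0 (-338688000) 0 319176100 4 x (-1514340050) 0 1276704400 0 1276704400 0 (by norm_num) (by norm_num) (by norm_num) (by norm_num) (by norm_num) (by norm_num))).add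
    (Tm_hasDerivAt 0 124184636 0 423360000 0 (-310461590) 5 x 2240984636 0 (-1552307950) 0 (-1241846360) 0 (by norm_num) (by norm_num) (by norm_num) (by norm_num) (by norm_num) (by norm_num))).add
    (Tm_hasDerivAt 0 0 0 (-254016000) 0 0 6 x (-1524096000) 0 0 0 0 0 (by norm_num) (by norm_num) (by norm_num) (by norm_num) (by norm_num) (by norm_num))

lemma fN2_deriv (x : ℝ) : HasDerivAt fN2 (fN3 x) x := by
  unfold fN2 fN3
  exact ((((((Tm_hasDerivAt 171873114 0 0 0 0 0 0 x 0 0 0 0 0 0 (by norm_num) (by norm_num) (by norm_num) (by norm_num) (by norm_num) (by norm_num)).add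
    (Tm_hasDerivAt 0 0 0 0 0 0 1 x 0 0 0 0 0 0 (by norm_num) (by norm_num) (by norm_num) (by norm_num) (by norm_num) (by norm_num))).add
    (Tm_hasDerivAt (-122703240) 0 245406480 0 490812960 0 2 x 0 1472438880 0 736219440 0 (-490812960) (by norm_num) (by norm_num) (by norm_num) (by norm_num) (by norm_num) (by norm_num))).add
    (Tm_hasDerivAt 748281540 0 (-1652658930) 0 (-2203545240) 0 3 x 0 (-9915953580) 0 (-4448389860) 0 4957976790 (by norm_num) (by norm_num) (by norm_num) (by norm_num) (by norm_num) (by norm_num))).add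
    (Tm_hasDerivAt (-1514340050) 0 1276704400 0 1276704400 0 4 x 0 7660226400 0 7334064600 0 (-5106817600) (by norm_num) (by norm_num) (by norm_num) (by norm_num) (by norm_num) (by norm_num))).add
    (Tm_hasDerivAt 2240984636 0 (-1552307950) 0 (-1241846360) 0 5 x 0 (-9313847700) 0 (-12446769540) 0 7761539750 (by norm_num) (by norm_num) (by norm_num) (by norm_num) (by norm_num) (by norm_num))).add
    (Tm_hasDerivAt (-1524096000) 0 0 0 0 0 6 x 0 0 0 9144576000 0 0 (by norm_num) (by norm_num) (by norm_num) (by norm_num) (by norm_num) (by norm_num))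

lemma fN3_deriv (x : ℝ) : HasDerivAt fN3 (fN4 x) x := by
  unfold fN3 fN4
  exact ((((((Tm_hasDerivAt 0 0 0 0 0 0 0 x 0 0 0 0 0 0 (by norm_num) (by norm_num) (by norm_num) (by norm_num) (by norm_num) (by norm_num)).add
    (Tm_hasDerivAt 0 0 0 0 0 0 1 x 0 0 0 0 0 0 (by norm_num) (by norm_num) (by norm_num) (by norm_num) (by norm_num) (by norm_num))).add
    (Tm_hasDerivAt 0 1472438880 0 736219440 0 (-490812960) 2 x 2944877760 0 (-981625920) 0 (-3926503680) 0 (by norm_num) (by norm_num) (by norm_num) (by norm_num) (by norm_num) (by norm_num))).add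
    (Tm_hasDerivAt 0 (-9915953580) 0 (-4448389860) 0 4957976790 3 x (-23261123160) 0 14873930370 0 39663814320 0 (by norm_num) (by norm_num) (by norm_num) (by norm_num) (by norm_num) (by norm_num))).add
    (Tm_hasDerivAt 0 7660226400 0 7334064600 0 (-5106817600) 4 x 36996484800 0 (-20427270400) 0 (-40854540800) 0 (by norm_num) (by norm_num) (by norm_num) (by norm_num) (by norm_num) (by norm_num))).add
    (Tm_hasDerivAt 0 (-9313847700) 0 (-12446769540) 0 7761539750 5 x (-71547695400) 0 38807698750 0 62092318000 0 (by norm_num) (by norm_num) (by norm_num) (by norm_num) (by norm_num) (by norm_num))).add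
    (Tm_hasDerivAt 0 0 0 9144576000 0 0 6 x 54867456000 0 0 0 0 0 (by norm_num) (by norm_num) (by norm_num) (by norm_num) (by norm_num) (by norm_num))

lemma fN4_deriv (x : ℝ) : HasDerivAt fN4 (fN5 x) x := by
  unfold fN4 fN5
  exact ((((((Tm_hasDerivAt 0 0 0 0 0 0 0 x 0 0 0 0 0 0 (by norm_num) (by norm_num) (by norm_num) (by norm_num) (by norm_num) (by norm_num)).add
    (Tm_hasDerivAt 0 0 0 0 0 0 1 x 0 0 0 0 0 0 (by norm_num) (by norm_num) (by norm_num) (by norm_num) (by norm_num) (by norm_num))).add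
    (Tm_hasDerivAt 2944877760 0 (-981625920) 0 (-3926503680) 0 2 x 0 (-9816259200) 0 (-9816259200) 0 1963251840 (by norm_num) (by norm_num) (by norm_num) (by norm_num) (by norm_num) (by norm_num))).add
    (Tm_hasDerivAt (-23261123160) 0 14873930370 0 39663814320 0 3 x 0 148739303700 0 109447183800 0 (-44621791110) (by norm_num) (by norm_num) (by norm_num) (by norm_num) (by norm_num) (by norm_num))).add
    (Tm_hasDerivAt 36996484800 0 (-20427270400) 0 (-40854540800) 0 4 x 0 (-204272704000) 0 (-188840480000) 0 81709081600 (by norm_num) (by norm_num) (by norm_num) (by norm_num) (by norm_num) (by norm_num))).add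
    (Tm_hasDerivAt (-71547695400) 0 38807698750 0 62092318000 0 5 x 0 388076987500 0 419830795000 0 (-194038493750) (by norm_num) (by norm_num) (by norm_num) (by norm_num) (by norm_num) (by norm_num))).add
    (Tm_hasDerivAt 54867456000 0 0 0 0 0 6 x 0 0 0 (-329204736000) 0 0 (by norm_num) (by norm_num) (by norm_num) (by norm_num) (by norm_num) (by norm_num))

lemma fN5_deriv (x : ℝ) : HasDerivAt fN5 (fN6 x) x := by
  unfold fN5 fN6
  exact ((((((Tm_hasDerivAt 0 0 0 0 0 0 0 x 0 0 0 0 0 0 (by norm_num) (by norm_num) (by norm_num) (by norm_num) (by norm_num) (by norm_num)).add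
    (Tm_hasDerivAt 0 0 0 0 0 0 1 x 0 0 0 0 0 0 (by norm_num) (by norm_num) (by norm_num) (by norm_num) (by norm_num) (by norm_num))).add
    (Tm_hasDerivAt 0 (-9816259200) 0 (-9816259200) 0 1963251840 2 x (-29448777600) 0 3926503680 0 23559022080 0 (by norm_num) (by norm_num) (by norm_num) (by norm_num) (by norm_num) (by norm_num))).add
    (Tm_hasDerivAt 0 148739303700 0 109447183800 0 (-44621791110) 3 x 477080855100 0 (-133865373330) 0 (-535461493320) 0 (by norm_num) (by norm_num) (by norm_num) (by norm_num) (by norm_num) (by norm_num))).add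
    (Tm_hasDerivAt 0 (-204272704000) 0 (-188840480000) 0 81709081600 4 x (-959634624000) 0 326836326400 0 980508979200 0 (by norm_num) (by norm_num) (by norm_num) (by norm_num) (by norm_num) (by norm_num))).add
    (Tm_hasDerivAt 0 388076987500 0 419830795000 0 (-194038493750) 5 x 2487230962500 0 (-970192468750) 0 (-2328461925000) 0 (by norm_num) (by norm_num) (by norm_num) (by norm_num) (by norm_num) (by norm_num))).add
    (Tm_hasDerivAt 0 0 0 (-329204736000) 0 0 6 x (-1975228416000) 0 0 0 0 0 (by norm_num) (by norm_num) (by norm_num) (by norm_num) (by norm_num) (by norm_num))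

lemma fN6_deriv (x : ℝ) : HasDerivAt fN6 (fN7 x) x := by
  unfold fN6 fN7
  exact ((((((Tm_hasDerivAt 0 0 0 0 0 0 0 x 0 0 0 0 0 0 (by norm_num) (by norm_num) (by norm_num) (by norm_num) (by norm_num) (by norm_num)).add
    (Tm_hasDerivAt 0 0 0 0 0 0 1 x 0 0 0 0 0 0 (by norm_num) (by norm_num) (by norm_num) (by norm_num) (by norm_num) (by norm_num))).add
    (Tm_hasDerivAt (-29448777600) 0 3926503680 0 23559022080 0 2 x 0 54971051520 0 82456577280 0 (-7853007360) (by norm_num) (by norm_num) (by norm_num) (by norm_num) (by norm_num) (by norm_num))).add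
    (Tm_hasDerivAt 477080855100 0 (-133865373330) 0 (-535461493320) 0 3 x 0 (-1874115226620) 0 (-1966704058620) 0 401596119990 (by norm_num) (by norm_num) (by norm_num) (by norm_num) (by norm_num) (by norm_num))).add
    (Tm_hasDerivAt (-959634624000) 0 326836326400 0 980508979200 0 4 x 0 4575708569600 0 4819047475200 0 (-1307345305600) (by norm_num) (by norm_num) (by norm_num) (by norm_num) (by norm_num) (by norm_num))).add
    (Tm_hasDerivAt 2487230962500 0 (-970192468750) 0 (-2328461925000) 0 5 x 0 (-13582694562500) 0 (-14764616737500) 0 4850962343750 (by norm_num) (by norm_num) (by norm_num) (by norm_num) (by norm_num) (by norm_num))).add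
    (Tm_hasDerivAt (-1975228416000) 0 0 0 0 0 6 x 0 0 0 11851370496000 0 0 (by norm_num) (by norm_num) (by norm_num) (by norm_num) (by norm_num) (by norm_num))

lemma fN7_deriv (x : ℝ) : HasDerivAt fN7 (fN8 x) x := by
  unfold fN7 fN8
  exact ((((((Tm_hasDerivAt 0 0 0 0 0 0 0 x 0 0 0 0 0 0 (by norm_num) (by norm_num) (by norm_num) (by norm_num) (by norm_num) (by norm_num)).add
    (Tm_hasDerivAt 0 0 0 0 0 0 1 x 0 0 0 0 0 0 (by norm_num) (by norm_num) (by norm_num) (by norm_num) (by norm_num) (by norm_num))).add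
    (Tm_hasDerivAt 0 54971051520 0 82456577280 0 (-7853007360) 2 x 219884206080 0 (-15706014720) 0 (-125648117760) 0 (by norm_num) (by norm_num) (by norm_num) (by norm_num) (by norm_num) (by norm_num))).add
    (Tm_hasDerivAt 0 (-1874115226620) 0 (-1966704058620) 0 401596119990 3 x (-7774227402480) 0 1204788359970 0 6425537919840 0 (by norm_num) (by norm_num) (by norm_num) (by norm_num) (by norm_num) (by norm_num))).add
    (Tm_hasDerivAt 0 4575708569600 0 4819047475200 0 (-1307345305600) 4 x 23851898470400 0 (-5229381222400) 0 (-20917524889600) 0 (by norm_num) (by norm_num) (by norm_num) (by norm_num) (by norm_num) (by norm_num))).add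
    (Tm_hasDerivAt 0 (-13582694562500) 0 (-14764616737500) 0 4850962343750 5 x (-87405778250000) 0 24254811718750 0 77615397500000 0 (by norm_num) (by norm_num) (by norm_num) (by norm_num) (by norm_num) (by norm_num))).add
    (Tm_hasDerivAt 0 0 0 11851370496000 0 0 6 x 71108222976000 0 0 0 0 0 (by norm_num) (by norm_num) (by norm_num) (by norm_num) (by norm_num) (by norm_num))

lemma fN8_deriv (x : ℝ) : HasDerivAt fN8 (fN9 x) x := by
  unfold fN8 fN9
  exact ((((((Tm_hasDerivAt 0 0 0 0 0 0 0 x 0 0 0 0 0 0 (by norm_num) (by norm_num) (by norm_num) (by norm_num) (by norm_num) (by norm_num)).add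
    (Tm_hasDerivAt 0 0 0 0 0 0 1 x 0 0 0 0 0 0 (by norm_num) (by norm_num) (by norm_num) (by norm_num) (by norm_num) (by norm_num))).add
    (Tm_hasDerivAt 219884206080 0 (-15706014720) 0 (-125648117760) 0 2 x 0 (-282708264960) 0 (-565416529920) 0 31412029440 (by norm_num) (by norm_num) (by norm_num) (by norm_num) (by norm_num) (by norm_num))).add
    (Tm_hasDerivAt (-7774227402480) 0 1204788359970 0 6425537919840 0 3 x 0 21686190479460 0 29748220127280 0 (-3614365079910) (by norm_num) (by norm_num) (by norm_num) (by norm_num) (by norm_num) (by norm_num))).add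
    (Tm_hasDerivAt 23851898470400 0 (-5229381222400) 0 (-20917524889600) 0 4 x 0 (-94128862003200) 0 (-116325118771200) 0 20917524889600 (by norm_num) (by norm_num) (by norm_num) (by norm_num) (by norm_num) (by norm_num))).add
    (Tm_hasDerivAt (-87405778250000) 0 24254811718750 0 77615397500000 0 5 x 0 436586610937500 0 514644288750000 0 (-121274058593750) (by norm_num) (by norm_num) (by norm_num) (by norm_num) (by norm_num) (by norm_num))).add
    (Tm_hasDerivAt 71108222976000 0 0 0 0 0 6 x 0 0 0 (-426649337856000) 0 0 (by norm_num) (by norm_num) (by norm_num) (by norm_num) (by norm_num) (by norm_num))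

lemma fN9_deriv (x : ℝ) : HasDerivAt fN9 (fN10 x) x := by
  unfold fN9 fN10
  exact ((((((Tm_hasDerivAt 0 0 0 0 0 0 0 x 0 0 0 0 0 0 (by norm_num) (by norm_num) (by norm_num) (by norm_num) (by norm_num) (by norm_num)).add
    (Tm_hasDerivAt 0 0 0 0 0 0 1 x 0 0 0 0 0 0 (by norm_num) (by norm_num) (by norm_num) (by norm_num) (by norm_num) (by norm_num))).add
    (Tm_hasDerivAt 0 (-282708264960) 0 (-565416529920) 0 31412029440 2 x (-1413541324800) 0 62824058880 0 628240588800 0 (by norm_num) (by norm_num) (by norm_num) (by norm_num) (by norm_num) (by norm_num))).add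
    (Tm_hasDerivAt 0 21686190479460 0 29748220127280 0 (-3614365079910) 3 x 110930850861300 0 (-10843095239730) 0 (-72287301598200) 0 (by norm_num) (by norm_num) (by norm_num) (by norm_num) (by norm_num) (by norm_num))).add
    (Tm_hasDerivAt 0 (-94128862003200) 0 (-116325118771200) 0 20917524889600 4 x (-559429337088000) 0 83670099558400 0 418350497792000 0 (by norm_num) (by norm_num) (by norm_num) (by norm_num) (by norm_num) (by norm_num))).add
    (Tm_hasDerivAt 0 436586610937500 0 514644288750000 0 (-121274058593750) 5 x 3009808054687500 0 (-606370292968750) 0 (-2425481171875000) 0 (by norm_num) (by norm_num) (by norm_num) (by norm_num) (by norm_num) (by norm_num))).add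
    (Tm_hasDerivAt 0 0 0 (-426649337856000) 0 0 6 x (-2559896027136000) 0 0 0 0 0 (by norm_num) (by norm_num) (by norm_num) (by norm_num) (by norm_num) (by norm_num))

lemma fN10_deriv (x : ℝ) : HasDerivAt fN10 (fN11 x) x := by
  unfold fN10 fN11
  exact ((((((Tm_hasDerivAt 0 0 0 0 0 0 0 x 0 0 0 0 0 0 (by norm_num) (by norm_num) (by norm_num) (by norm_num) (by norm_num) (by norm_num)).add
    (Tm_hasDerivAt 0 0 0 0 0 0 1 x 0 0 0 0 0 0 (by norm_num) (by norm_num) (by norm_num) (by norm_num) (by norm_num) (by norm_num))).add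
    (Tm_hasDerivAt (-1413541324800) 0 62824058880 0 628240588800 0 2 x 0 1382129295360 0 3455323238400 0 (-125648117760) (by norm_num) (by norm_num) (by norm_num) (by norm_num) (by norm_num) (by norm_num))).add
    (Tm_hasDerivAt 110930850861300 0 (-10843095239730) 0 (-72287301598200) 0 3 x 0 (-238548095274060) 0 (-405079854182100) 0 32529285719190 (by norm_num) (by norm_num) (by norm_num) (by norm_num) (by norm_num) (by norm_num))).add
    (Tm_hasDerivAt (-559429337088000) 0 83670099558400 0 418350497792000 0 4 x 0 1840742190284800 0 2656067846144000 0 (-334680398233600) (by norm_num) (by norm_num) (by norm_num) (by norm_num) (by norm_num) (by norm_num))).add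
    (Tm_hasDerivAt 3009808054687500 0 (-606370292968750) 0 (-2425481171875000) 0 5 x 0 (-13340146445312500) 0 (-17474521445312500) 0 3031851464843750 (by norm_num) (by norm_num) (by norm_num) (by norm_num) (by norm_num) (by norm_num))).add
    (Tm_hasDerivAt (-2559896027136000) 0 0 0 0 0 6 x 0 0 0 15359376162816000 0 0 (by norm_num) (by norm_num) (by norm_num) (by norm_num) (by norm_num) (by norm_num))

lemma fN11_deriv (x : ℝ) : HasDerivAt fN11 (fN12 x) x := by
  unfold fN11 fN12
  exact ((((((Tm_hasDerivAt 0 0 0 0 0 0 0 x 0 0 0 0 0 0 (by norm_num) (by norm_num) (by norm_num) (by norm_num) (by norm_num) (by norm_num)).add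
    (Tm_hasDerivAt 0 0 0 0 0 0 1 x 0 0 0 0 0 0 (by norm_num) (by norm_num) (by norm_num) (by norm_num) (by norm_num) (by norm_num))).add
    (Tm_hasDerivAt 0 1382129295360 0 3455323238400 0 (-125648117760) 2 x 8292775772160 0 (-251296235520) 0 (-3015554826240) 0 (by norm_num) (by norm_num) (by norm_num) (by norm_num) (by norm_num) (by norm_num))).add
    (Tm_hasDerivAt 0 (-238548095274060) 0 (-405079854182100) 0 32529285719190 3 x (-1453787657820360) 0 97587857157570 0 780702857260560 0 (by norm_num) (by norm_num) (by norm_num) (by norm_num) (by norm_num) (by norm_num))).add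
    (Tm_hasDerivAt 0 1840742190284800 0 2656067846144000 0 (-334680398233600) 4 x 12465013574860800 0 (-1338721592934400) 0 (-8032329557606400) 0 (by norm_num) (by norm_num) (by norm_num) (by norm_num) (by norm_num) (by norm_num))).add
    (Tm_hasDerivAt 0 (-13340146445312500) 0 (-17474521445312500) 0 3031851464843750 5 x (-100712753671875000) 0 15159257324218750 0 72764435156250000 0 (by norm_num) (by norm_num) (by norm_num) (by norm_num) (by norm_num) (by norm_num))).add
    (Tm_hasDerivAt 0 0 0 15359376162816000 0 0 6 x 92156256976896000 0 0 0 0 0 (by norm_num) (by norm_num) (by norm_num) (by norm_num) (by norm_num) (by norm_num))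

lemma fN0_tends : Tendsto fN0 (nhdsWithin 0 (Set.Ioi 0)) (nhds (0 : ℝ)) := by
  have hc : Continuous fN0 := by unfold fN0 Tm; fun_prop
  have h0 : fN0 0 = (0 : ℝ) := by unfold fN0 Tm; norm_num
  have h := (hc.tendsto 0).mono_left (nhdsWithin_le_nhds (s := Set.Ioi 0))
  rwa [h0] at h

lemma fN1_tends : Tendsto fN1 (nhdsWithin 0 (Set.Ioi 0)) (nhds (0 : ℝ)) := by
  have hc : Continuous fN1 := by unfold fN1 Tm; fun_prop
  have h0 : fN1 0 = (0 : ℝ) := by unfold fN1 Tm; norm_num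
  have h := (hc.tendsto 0).mono_left (nhdsWithin_le_nhds (s := Set.Ioi 0))
  rwa [h0] at h

lemma fN2_tends : Tendsto fN2 (nhdsWithin 0 (Set.Ioi 0)) (nhds (0 : ℝ)) := by
  have hc : Continuous fN2 := by unfold fN2 Tm; fun_prop
  have h0 : fN2 0 = (0 : ℝ) := by unfold fN2 Tm; norm_num
  have h := (hc.tendsto 0).mono_left (nhdsWithin_le_nhds (s := Set.Ioi 0))
  rwa [h0] at h

lemma fN3_tends : Tendsto fN3 (nhdsWithin 0 (Set.Ioi 0)) (nhds (0 : ℝ)) := by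
  have hc : Continuous fN3 := by unfold fN3 Tm; fun_prop
  have h0 : fN3 0 = (0 : ℝ) := by unfold fN3 Tm; norm_num
  have h := (hc.tendsto 0).mono_left (nhdsWithin_le_nhds (s := Set.Ioi 0))
  rwa [h0] at h

lemma fN4_tends : Tendsto fN4 (nhdsWithin 0 (Set.Ioi 0)) (nhds (0 : ℝ)) := by
  have hc : Continuous fN4 := by unfold fN4 Tm; fun_prop
  have h0 : fN4 0 = (0 : ℝ) := by unfold fN4 Tm; norm_num
  have h := (hc.tendsto 0).mono_left (nhdsWithin_le_nhds (s := Set.Ioi 0))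
  rwa [h0] at h

lemma fN5_tends : Tendsto fN5 (nhdsWithin 0 (Set.Ioi 0)) (nhds (0 : ℝ)) := by
  have hc : Continuous fN5 := by unfold fN5 Tm; fun_prop
  have h0 : fN5 0 = (0 : ℝ) := by unfold fN5 Tm; norm_num
  have h := (hc.tendsto 0).mono_left (nhdsWithin_le_nhds (s := Set.Ioi 0))
  rwa [h0] at h

lemma fN6_tends : Tendsto fN6 (nhdsWithin 0 (Set.Ioi 0)) (nhds (0 : ℝ)) := by
  have hc : Continuous fN6 := by unfold fN6 Tm; fun_prop
  have h0 : fN6 0 = (0 : ℝ) := by unfold fN6 Tm; norm_num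
  have h := (hc.tendsto 0).mono_left (nhdsWithin_le_nhds (s := Set.Ioi 0))
  rwa [h0] at h

lemma fN7_tends : Tendsto fN7 (nhdsWithin 0 (Set.Ioi 0)) (nhds (0 : ℝ)) := by
  have hc : Continuous fN7 := by unfold fN7 Tm; fun_prop
  have h0 : fN7 0 = (0 : ℝ) := by unfold fN7 Tm; norm_num
  have h := (hc.tendsto 0).mono_left (nhdsWithin_le_nhds (s := Set.Ioi 0))
  rwa [h0] at h

lemma fN8_tends : Tendsto fN8 (nhdsWithin 0 (Set.Ioi 0)) (nhds (0 : ℝ)) := by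
  have hc : Continuous fN8 := by unfold fN8 Tm; fun_prop
  have h0 : fN8 0 = (0 : ℝ) := by unfold fN8 Tm; norm_num
  have h := (hc.tendsto 0).mono_left (nhdsWithin_le_nhds (s := Set.Ioi 0))
  rwa [h0] at h

lemma fN9_tends : Tendsto fN9 (nhdsWithin 0 (Set.Ioi 0)) (nhds (0 : ℝ)) := by
  have hc : Continuous fN9 := by unfold fN9 Tm; fun_prop
  have h0 : fN9 0 = (0 : ℝ) := by unfold fN9 Tm; norm_num
  have h := (hc.tendsto 0).mono_left (nhdsWithin_le_nhds (s := Set.Ioi 0))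
  rwa [h0] at h

lemma fN10_tends : Tendsto fN10 (nhdsWithin 0 (Set.Ioi 0)) (nhds (0 : ℝ)) := by
  have hc : Continuous fN10 := by unfold fN10 Tm; fun_prop
  have h0 : fN10 0 = (0 : ℝ) := by unfold fN10 Tm; norm_num
  have h := (hc.tendsto 0).mono_left (nhdsWithin_le_nhds (s := Set.Ioi 0))
  rwa [h0] at h

lemma fN11_tends : Tendsto fN11 (nhdsWithin 0 (Set.Ioi 0)) (nhds (0 : ℝ)) := by
  have hc : Continuous fN11 := by unfold fN11 Tm; fun_prop
  have h0 : fN11 0 = (0 : ℝ) := by unfold fN11 Tm; norm_num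
  have h := (hc.tendsto 0).mono_left (nhdsWithin_le_nhds (s := Set.Ioi 0))
  rwa [h0] at h

lemma fN12_tends : Tendsto fN12 (nhdsWithin 0 (Set.Ioi 0)) (nhds (2463021997833600 : ℝ)) := by
  have hc : Continuous fN12 := by unfold fN12 Tm; fun_prop
  have h0 : fN12 0 = (2463021997833600 : ℝ) := by unfold fN12 Tm; norm_num
  have h := (hc.tendsto 0).mono_left (nhdsWithin_le_nhds (s := Set.Ioi 0))
  rwa [h0] at h

lemma fN11_lim : Tendsto (fun v => fN11 v / v^1) (nhdsWithin 0 (Set.Ioi 0)) (nhds (2463021997833600 : ℝ)) := by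
  have hdiv : Tendsto (fun x => fN12 x / ((1:ℝ)*x^0)) (nhdsWithin 0 (Set.Ioi 0)) (nhds (2463021997833600 : ℝ)) := by
    exact fN12_tends.congr fun x => by ring
  have hgg : ∀ x ∈ Set.Ioo (0:ℝ) 1, HasDerivAt (fun v : ℝ => v^1) ((1:ℝ)*x^0) x := by
    intro x _; have h := hasDerivAt_pow 1 x; norm_num at h ⊢; exact h
  have hga : Tendsto (fun v : ℝ => v^1) (nhdsWithin 0 (Set.Ioi 0)) (nhds 0) := by
    have h := ((continuous_pow 1).tendsto (0:ℝ)).mono_left (nhdsWithin_le_nhds (s := Set.Ioi 0))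
    norm_num at h; exact h.congr fun x => (pow_one x).symm
  exact HasDerivAt.lhopital_zero_right_on_Ioo one_pos (fun x _ => fN11_deriv x) hgg
    (fun x hx => by have h1 : (0:ℝ) < x := hx.1; positivity) fN11_tends hga hdiv

lemma fN10_lim : Tendsto (fun v => fN10 v / v^2) (nhdsWithin 0 (Set.Ioi 0)) (nhds (1231510998916800 : ℝ)) := by
  have hdiv : Tendsto (fun x => fN11 x / ((2:ℝ)*x^1)) (nhdsWithin 0 (Set.Ioi 0)) (nhds (1231510998916800 : ℝ)) := by
    have h := fN11_lim.div_const (2:ℝ)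
    rw [show (2463021997833600:ℝ)/2 = (1231510998916800:ℝ) by norm_num] at h
    exact h.congr fun x => by rw [div_div, mul_comm (x^1) ((2:ℝ))]
  have hgg : ∀ x ∈ Set.Ioo (0:ℝ) 1, HasDerivAt (fun v : ℝ => v^2) ((2:ℝ)*x^1) x := by
    intro x _; have h := hasDerivAt_pow 2 x; norm_num at h ⊢; exact h
  have hga : Tendsto (fun v : ℝ => v^2) (nhdsWithin 0 (Set.Ioi 0)) (nhds 0) := by
    have h := ((continuous_pow 2).tendsto (0:ℝ)).mono_left (nhdsWithin_le_nhds (s := Set.Ioi 0))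
    norm_num at h; exact h
  exact HasDerivAt.lhopital_zero_right_on_Ioo one_pos (fun x _ => fN10_deriv x) hgg
    (fun x hx => by have h1 : (0:ℝ) < x := hx.1; positivity) fN10_tends hga hdiv

lemma fN9_lim : Tendsto (fun v => fN9 v / v^3) (nhdsWithin 0 (Set.Ioi 0)) (nhds (410503666305600 : ℝ)) := by
  have hdiv : Tendsto (fun x => fN10 x / ((3:ℝ)*x^2)) (nhdsWithin 0 (Set.Ioi 0)) (nhds (410503666305600 : ℝ)) := by
    have h := fN10_lim.div_const (3:ℝ)
    rw [show (1231510998916800:ℝ)/3 = (410503666305600:ℝ) by norm_num] at h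
    exact h.congr fun x => by rw [div_div, mul_comm (x^2) ((3:ℝ))]
  have hgg : ∀ x ∈ Set.Ioo (0:ℝ) 1, HasDerivAt (fun v : ℝ => v^3) ((3:ℝ)*x^2) x := by
    intro x _; have h := hasDerivAt_pow 3 x; norm_num at h ⊢; exact h
  have hga : Tendsto (fun v : ℝ => v^3) (nhdsWithin 0 (Set.Ioi 0)) (nhds 0) := by
    have h := ((continuous_pow 3).tendsto (0:ℝ)).mono_left (nhdsWithin_le_nhds (s := Set.Ioi 0))
    norm_num at h; exact h
  exact HasDerivAt.lhopital_zero_right_on_Ioo one_pos (fun x _ => fN9_deriv x) hgg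
    (fun x hx => by have h1 : (0:ℝ) < x := hx.1; positivity) fN9_tends hga hdiv

lemma fN8_lim : Tendsto (fun v => fN8 v / v^4) (nhdsWithin 0 (Set.Ioi 0)) (nhds (102625916576400 : ℝ)) := by
  have hdiv : Tendsto (fun x => fN9 x / ((4:ℝ)*x^3)) (nhdsWithin 0 (Set.Ioi 0)) (nhds (102625916576400 : ℝ)) := by
    have h := fN9_lim.div_const (4:ℝ)
    rw [show (410503666305600:ℝ)/4 = (102625916576400:ℝ) by norm_num] at h
    exact h.congr fun x => by rw [div_div, mul_comm (x^3) ((4:ℝ))]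
  have hgg : ∀ x ∈ Set.Ioo (0:ℝ) 1, HasDerivAt (fun v : ℝ => v^4) ((4:ℝ)*x^3) x := by
    intro x _; have h := hasDerivAt_pow 4 x; norm_num at h ⊢; exact h
  have hga : Tendsto (fun v : ℝ => v^4) (nhdsWithin 0 (Set.Ioi 0)) (nhds 0) := by
    have h := ((continuous_pow 4).tendsto (0:ℝ)).mono_left (nhdsWithin_le_nhds (s := Set.Ioi 0))
    norm_num at h; exact h
  exact HasDerivAt.lhopital_zero_right_on_Ioo one_pos (fun x _ => fN8_deriv x) hgg
    (fun x hx => by have h1 : (0:ℝ) < x := hx.1; positivity) fN8_tends hga hdiv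

lemma fN7_lim : Tendsto (fun v => fN7 v / v^5) (nhdsWithin 0 (Set.Ioi 0)) (nhds (20525183315280 : ℝ)) := by
  have hdiv : Tendsto (fun x => fN8 x / ((5:ℝ)*x^4)) (nhdsWithin 0 (Set.Ioi 0)) (nhds (20525183315280 : ℝ)) := by
    have h := fN8_lim.div_const (5:ℝ)
    rw [show (102625916576400:ℝ)/5 = (20525183315280:ℝ) by norm_num] at h
    exact h.congr fun x => by rw [div_div, mul_comm (x^4) ((5:ℝ))]
  have hgg : ∀ x ∈ Set.Ioo (0:ℝ) 1, HasDerivAt (fun v : ℝ => v^5) ((5:ℝ)*x^4) x := by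
    intro x _; have h := hasDerivAt_pow 5 x; norm_num at h ⊢; exact h
  have hga : Tendsto (fun v : ℝ => v^5) (nhdsWithin 0 (Set.Ioi 0)) (nhds 0) := by
    have h := ((continuous_pow 5).tendsto (0:ℝ)).mono_left (nhdsWithin_le_nhds (s := Set.Ioi 0))
    norm_num at h; exact h
  exact HasDerivAt.lhopital_zero_right_on_Ioo one_pos (fun x _ => fN7_deriv x) hgg
    (fun x hx => by have h1 : (0:ℝ) < x := hx.1; positivity) fN7_tends hga hdiv

lemma fN6_lim : Tendsto (fun v => fN6 v / v^6) (nhdsWithin 0 (Set.Ioi 0)) (nhds (3420863885880 : ℝ)) := by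
  have hdiv : Tendsto (fun x => fN7 x / ((6:ℝ)*x^5)) (nhdsWithin 0 (Set.Ioi 0)) (nhds (3420863885880 : ℝ)) := by
    have h := fN7_lim.div_const (6:ℝ)
    rw [show (20525183315280:ℝ)/6 = (3420863885880:ℝ) by norm_num] at h
    exact h.congr fun x => by rw [div_div, mul_comm (x^5) ((6:ℝ))]
  have hgg : ∀ x ∈ Set.Ioo (0:ℝ) 1, HasDerivAt (fun v : ℝ => v^6) ((6:ℝ)*x^5) x := by
    intro x _; have h := hasDerivAt_pow 6 x; norm_num at h ⊢; exact h
  have hga : Tendsto (fun v : ℝ => v^6) (nhdsWithin 0 (Set.Ioi 0)) (nhds 0) := by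
    have h := ((continuous_pow 6).tendsto (0:ℝ)).mono_left (nhdsWithin_le_nhds (s := Set.Ioi 0))
    norm_num at h; exact h
  exact HasDerivAt.lhopital_zero_right_on_Ioo one_pos (fun x _ => fN6_deriv x) hgg
    (fun x hx => by have h1 : (0:ℝ) < x := hx.1; positivity) fN6_tends hga hdiv

lemma fN5_lim : Tendsto (fun v => fN5 v / v^7) (nhdsWithin 0 (Set.Ioi 0)) (nhds (488694840840 : ℝ)) := by
  have hdiv : Tendsto (fun x => fN6 x / ((7:ℝ)*x^6)) (nhdsWithin 0 (Set.Ioi 0)) (nhds (488694840840 : ℝ)) := by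
    have h := fN6_lim.div_const (7:ℝ)
    rw [show (3420863885880:ℝ)/7 = (488694840840:ℝ) by norm_num] at h
    exact h.congr fun x => by rw [div_div, mul_comm (x^6) ((7:ℝ))]
  have hgg : ∀ x ∈ Set.Ioo (0:ℝ) 1, HasDerivAt (fun v : ℝ => v^7) ((7:ℝ)*x^6) x := by
    intro x _; have h := hasDerivAt_pow 7 x; norm_num at h ⊢; exact h
  have hga : Tendsto (fun v : ℝ => v^7) (nhdsWithin 0 (Set.Ioi 0)) (nhds 0) := by
    have h := ((continuous_pow 7).tendsto (0:ℝ)).mono_left (nhdsWithin_le_nhds (s := Set.Ioi 0))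
    norm_num at h; exact h
  exact HasDerivAt.lhopital_zero_right_on_Ioo one_pos (fun x _ => fN5_deriv x) hgg
    (fun x hx => by have h1 : (0:ℝ) < x := hx.1; positivity) fN5_tends hga hdiv

lemma fN4_lim : Tendsto (fun v => fN4 v / v^8) (nhdsWithin 0 (Set.Ioi 0)) (nhds (61086855105 : ℝ)) := by
  have hdiv : Tendsto (fun x => fN5 x / ((8:ℝ)*x^7)) (nhdsWithin 0 (Set.Ioi 0)) (nhds (61086855105 : ℝ)) := by
    have h := fN5_lim.div_const (8:ℝ)
    rw [show (488694840840:ℝ)/8 = (61086855105:ℝ) by norm_num] at h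
    exact h.congr fun x => by rw [div_div, mul_comm (x^7) ((8:ℝ))]
  have hgg : ∀ x ∈ Set.Ioo (0:ℝ) 1, HasDerivAt (fun v : ℝ => v^8) ((8:ℝ)*x^7) x := by
    intro x _; have h := hasDerivAt_pow 8 x; norm_num at h ⊢; exact h
  have hga : Tendsto (fun v : ℝ => v^8) (nhdsWithin 0 (Set.Ioi 0)) (nhds 0) := by
    have h := ((continuous_pow 8).tendsto (0:ℝ)).mono_left (nhdsWithin_le_nhds (s := Set.Ioi 0))
    norm_num at h; exact h
  exact HasDerivAt.lhopital_zero_right_on_Ioo one_pos (fun x _ => fN4_deriv x) hgg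
    (fun x hx => by have h1 : (0:ℝ) < x := hx.1; positivity) fN4_tends hga hdiv

lemma fN3_lim : Tendsto (fun v => fN3 v / v^9) (nhdsWithin 0 (Set.Ioi 0)) (nhds (6787428345 : ℝ)) := by
  have hdiv : Tendsto (fun x => fN4 x / ((9:ℝ)*x^8)) (nhdsWithin 0 (Set.Ioi 0)) (nhds (6787428345 : ℝ)) := by
    have h := fN4_lim.div_const (9:ℝ)
    rw [show (61086855105:ℝ)/9 = (6787428345:ℝ) by norm_num] at h
    exact h.congr fun x => by rw [div_div, mul_comm (x^8) ((9:ℝ))]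
  have hgg : ∀ x ∈ Set.Ioo (0:ℝ) 1, HasDerivAt (fun v : ℝ => v^9) ((9:ℝ)*x^8) x := by
    intro x _; have h := hasDerivAt_pow 9 x; norm_num at h ⊢; exact h
  have hga : Tendsto (fun v : ℝ => v^9) (nhdsWithin 0 (Set.Ioi 0)) (nhds 0) := by
    have h := ((continuous_pow 9).tendsto (0:ℝ)).mono_left (nhdsWithin_le_nhds (s := Set.Ioi 0))
    norm_num at h; exact h
  exact HasDerivAt.lhopital_zero_right_on_Ioo one_pos (fun x _ => fN3_deriv x) hgg
    (fun x hx => by have h1 : (0:ℝ) < x := hx.1; positivity) fN3_tends hga hdiv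

lemma fN2_lim : Tendsto (fun v => fN2 v / v^10) (nhdsWithin 0 (Set.Ioi 0)) (nhds ((1357485669/2) : ℝ)) := by
  have hdiv : Tendsto (fun x => fN3 x / ((10:ℝ)*x^9)) (nhdsWithin 0 (Set.Ioi 0)) (nhds ((1357485669/2) : ℝ)) := by
    have h := fN3_lim.div_const (10:ℝ)
    rw [show (6787428345:ℝ)/10 = ((1357485669/2):ℝ) by norm_num] at h
    exact h.congr fun x => by rw [div_div, mul_comm (x^9) ((10:ℝ))]
  have hgg : ∀ x ∈ Set.Ioo (0:ℝ) 1, HasDerivAt (fun v : ℝ => v^10) ((10:ℝ)*x^9) x := by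
    intro x _; have h := hasDerivAt_pow 10 x; norm_num at h ⊢; exact h
  have hga : Tendsto (fun v : ℝ => v^10) (nhdsWithin 0 (Set.Ioi 0)) (nhds 0) := by
    have h := ((continuous_pow 10).tendsto (0:ℝ)).mono_left (nhdsWithin_le_nhds (s := Set.Ioi 0))
    norm_num at h; exact h
  exact HasDerivAt.lhopital_zero_right_on_Ioo one_pos (fun x _ => fN2_deriv x) hgg
    (fun x hx => by have h1 : (0:ℝ) < x := hx.1; positivity) fN2_tends hga hdiv

lemma fN1_lim : Tendsto (fun v => fN1 v / v^11) (nhdsWithin 0 (Set.Ioi 0)) (nhds ((1357485669/22) : ℝ)) := by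
  have hdiv : Tendsto (fun x => fN2 x / ((11:ℝ)*x^10)) (nhdsWithin 0 (Set.Ioi 0)) (nhds ((1357485669/22) : ℝ)) := by
    have h := fN2_lim.div_const (11:ℝ)
    rw [show ((1357485669/2):ℝ)/11 = ((1357485669/22):ℝ) by norm_num] at h
    exact h.congr fun x => by rw [div_div, mul_comm (x^10) ((11:ℝ))]
  have hgg : ∀ x ∈ Set.Ioo (0:ℝ) 1, HasDerivAt (fun v : ℝ => v^11) ((11:ℝ)*x^10) x := by
    intro x _; have h := hasDerivAt_pow 11 x; norm_num at h ⊢; exact h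
  have hga : Tendsto (fun v : ℝ => v^11) (nhdsWithin 0 (Set.Ioi 0)) (nhds 0) := by
    have h := ((continuous_pow 11).tendsto (0:ℝ)).mono_left (nhdsWithin_le_nhds (s := Set.Ioi 0))
    norm_num at h; exact h
  exact HasDerivAt.lhopital_zero_right_on_Ioo one_pos (fun x _ => fN1_deriv x) hgg
    (fun x hx => by have h1 : (0:ℝ) < x := hx.1; positivity) fN1_tends hga hdiv

lemma fN0_lim : Tendsto (fun v => fN0 v / v^12) (nhdsWithin 0 (Set.Ioi 0)) (nhds ((452495223/88) : ℝ)) := by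
  have hdiv : Tendsto (fun x => fN1 x / ((12:ℝ)*x^11)) (nhdsWithin 0 (Set.Ioi 0)) (nhds ((452495223/88) : ℝ)) := by
    have h := fN1_lim.div_const (12:ℝ)
    rw [show ((1357485669/22):ℝ)/12 = ((452495223/88):ℝ) by norm_num] at h
    exact h.congr fun x => by rw [div_div, mul_comm (x^11) ((12:ℝ))]
  have hgg : ∀ x ∈ Set.Ioo (0:ℝ) 1, HasDerivAt (fun v : ℝ => v^12) ((12:ℝ)*x^11) x := by
    intro x _; have h := hasDerivAt_pow 12 x; norm_num at h ⊢; exact h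
  have hga : Tendsto (fun v : ℝ => v^12) (nhdsWithin 0 (Set.Ioi 0)) (nhds 0) := by
    have h := ((continuous_pow 12).tendsto (0:ℝ)).mono_left (nhdsWithin_le_nhds (s := Set.Ioi 0))
    norm_num at h; exact h
  exact HasDerivAt.lhopital_zero_right_on_Ioo one_pos (fun x _ => fN0_deriv x) hgg
    (fun x hx => by have h1 : (0:ℝ) < x := hx.1; positivity) fN0_tends hga hdiv

noncomputable def fM0 (v : ℝ) : ℝ :=
  Tm 0 0 (-26616594795/22) 0 0 0 0 v
  + Tm 0 0 (47511998415/22) 0 0 0 1 v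
  + Tm 0 0 (-14249724510/11) 0 0 0 2 v
  + Tm (-42336000) 0 (28441950915/44) 0 0 0 3 v
  + Tm 84672000 0 (-4017944665/22) 0 0 0 4 v
  + Tm (-84672000) 0 (3184557215/44) 0 0 0 5 v
  + Tm 42336000 0 0 0 0 0 6 v

noncomputable def fM1 (v : ℝ) : ℝ :=
  Tm 0 (-26616594795/11) 0 0 0 0 0 v
  + Tm 0 (47511998415/11) 0 0 0 (-47511998415/22) 1 v
  + Tm 0 (-28499449020/11) 0 0 0 (28499449020/11) 2 v
  + Tm 0 (28441950915/22) 0 127008000 0 (-85325852745/44) 3 v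
  + Tm 0 (-4017944665/11) 0 (-338688000) 0 (8035889330/11) 4 v
  + Tm 0 (3184557215/22) 0 423360000 0 (-15922786075/44) 5 v
  + Tm 0 0 0 (-254016000) 0 0 6 v

noncomputable def fM2 (v : ℝ) : ℝ :=
  Tm (-26616594795/11) 0 0 0 0 0 0 v
  + Tm (47511998415/11) 0 (-47511998415/22) 0 (-95023996830/11) 0 1 v
  + Tm (-28499449020/11) 0 (56998898040/11) 0 (113997796080/11) 0 2 v
  + Tm (36824478915/22) 0 (-255977558235/44) 0 (-85325852745/11) 0 3 v
  + Tm (-18920216665/11) 0 (32143557320/11) 0 (32143557320/11) 0 4 v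
  + Tm (49754157215/22) 0 (-79613930375/44) 0 (-15922786075/11) 0 5 v
  + Tm (-1524096000) 0 0 0 0 0 6 v

noncomputable def fM3 (v : ℝ) : ℝ :=
  Tm 0 0 0 0 0 0 0 v
  + Tm 0 (-142535995245/11) 0 (-142535995245/11) 0 (47511998415/22) 1 v
  + Tm 0 (341993388240/11) 0 (170996694120/11) 0 (-113997796080/11) 2 v
  + Tm 0 (-767932674705/22) 0 (-281125142235/22) 0 (767932674705/44) 3 v
  + Tm 0 (192861343920/11) 0 (107824423980/11) 0 (-128574229280/11) 4 v
  + Tm 0 (-238841791125/22) 0 (-280616358225/22) 0 (398069651875/44) 5 v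
  + Tm 0 0 0 9144576000 0 0 6 v

noncomputable def fM4 (v : ℝ) : ℝ :=
  Tm 0 0 0 0 0 0 0 v
  + Tm (-285071990490/11) 0 (47511998415/22) 0 (190047993660/11) 0 1 v
  + Tm (683986776480/11) 0 (-227995592160/11) 0 (-911982368640/11) 0 2 v
  + Tm (-805654050705/11) 0 (2303798024115/44) 0 (1535865349410/11) 0 3 v
  + Tm (624159039840/11) 0 (-514296917120/11) 0 (-1028593834240/11) 0 4 v
  + Tm (-820961791125/11) 0 (1990348259375/44) 0 (796139303750/11) 0 5 v
  + Tm 54867456000 0 0 0 0 0 6 v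

noncomputable def fM5 (v : ℝ) : ℝ :=
  Tm 0 0 0 0 0 0 0 v
  + Tm 0 (237559992075/11) 0 (475119984150/11) 0 (-47511998415/22) 1 v
  + Tm 0 (-2279955921600/11) 0 (-2279955921600/11) 0 (455991184320/11) 2 v
  + Tm 0 (11518990120575/22) 0 (3952827501525/11) 0 (-6911394072345/44) 3 v
  + Tm 0 (-5142969171200/11) 0 (-3525229993600/11) 0 (2057187668480/11) 4 v
  + Tm 0 (9951741296875/22) 0 (4900948259375/11) 0 (-9951741296875/44) 5 v
  + Tm 0 0 0 (-329204736000) 0 0 6 v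

noncomputable def fM6 (v : ℝ) : ℝ :=
  Tm 0 0 0 0 0 0 0 v
  + Tm (712679976225/11) 0 (-47511998415/22) 0 (-285071990490/11) 0 1 v
  + Tm (-6839867764800/11) 0 (911982368640/11) 0 (5471894211840/11) 0 2 v
  + Tm (35235955129725/22) 0 (-20734182217035/44) 0 (-20734182217035/11) 0 3 v
  + Tm (-19243889145600/11) 0 (8228750673920/11) 0 (24686252021760/11) 0 4 v
  + Tm (58961223890625/22) 0 (-49758706484375/44) 0 (-29855223890625/11) 0 5 v
  + Tm (-1975228416000) 0 0 0 0 0 6 v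

noncomputable def fM7 (v : ℝ) : ℝ :=
  Tm 0 0 0 0 0 0 0 v
  + Tm 0 (-332583988905/11) 0 (-997751966715/11) 0 (47511998415/22) 1 v
  + Tm 0 (12767753160960/11) 0 (19151629741440/11) 0 (-1823964737280/11) 2 v
  + Tm 0 (-145139275519245/22) 0 (-147176229823245/22) 0 (62202546651105/44) 3 v
  + Tm 0 (115202509434880/11) 0 (101661808604160/11) 0 (-32915002695680/11) 4 v
  + Tm 0 (-348310945390625/22) 0 (-354516567234375/22) 0 (248793532421875/44) 5 v
  + Tm 0 0 0 11851370496000 0 0 6 v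

noncomputable def fM8 (v : ℝ) : ℝ :=
  Tm 0 0 0 0 0 0 0 v
  + Tm (-1330335955620/11) 0 (47511998415/22) 0 (380095987320/11) 0 1 v
  + Tm (51071012643840/11) 0 (-3647929474560/11) 0 (-29183435796480/11) 0 2 v
  + Tm (-293333982494490/11) 0 (186607639953315/44) 0 (248810186604420/11) 0 3 v
  + Tm (521849743851520/11) 0 (-131660010782720/11) 0 (-526640043130880/11) 0 4 v
  + Tm (-1060446890781250/11) 0 (1243967662109375/44) 0 (995174129687500/11) 0 5 v
  + Tm 71108222976000 0 0 0 0 0 6 v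

noncomputable def fM9 (v : ℝ) : ℝ :=
  Tm 0 0 0 0 0 0 0 v
  + Tm 0 (427607985735/11) 0 (1710431942940/11) 0 (-47511998415/22) 1 v
  + Tm 0 (-65662730542080/11) 0 (-131325461084160/11) 0 (7295858949120/11) 2 v
  + Tm 0 (1679468759579835/22) 0 (1128812134087890/11) 0 (-559822919859945/44) 3 v
  + Tm 0 (-2369880194088960/11) 0 (-2614039018536960/11) 0 (526640043130880/11) 4 v
  + Tm 0 (11195708958984375/22) 0 (6297408583593750/11) 0 (-6219838310546875/44) 5 v
  + Tm 0 0 0 (-426649337856000) 0 0 6 v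

noncomputable def fM10 (v : ℝ) : ℝ :=
  Tm 0 0 0 0 0 0 0 v
  + Tm (2138039928675/11) 0 (-47511998415/22) 0 (-475119984150/11) 0 1 v
  + Tm (-328313652710400/11) 0 (14591717898240/11) 0 (145917178982400/11) 0 2 v
  + Tm (8452341564107175/22) 0 (-1679468759579835/44) 0 (-2799114599299725/11) 0 3 v
  + Tm (-12826036268236800/11) 0 (2106560172523520/11) 0 (10532800862617600/11) 0 4 v
  + Tm (74169794794921875/22) 0 (-31099191552734375/44) 0 (-31099191552734375/11) 0 5 v
  + Tm (-2559896027136000) 0 0 0 0 0 6 v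

noncomputable def fM11 (v : ℝ) : ℝ :=
  Tm 0 0 0 0 0 0 0 v
  + Tm 0 (-47511998415) 0 (-237559992075) 0 (47511998415/22) 1 v
  + Tm 0 29183435796480 0 72958589491200 0 (-29183435796480/11) 2 v
  + Tm 0 (-1679468759579835/2) 0 (-2814113990083725/2) 0 (5038406278739505/44) 3 v
  + Tm 0 4213120345047040 0 5621540539596800 0 (-8426240690094080/11) 4 v
  + Tm 0 (-31099191552734375/2) 0 (-39367941552734375/2) 0 (155495957763671875/44) 5 v
  + Tm 0 0 0 15359376162816000 0 0 6 v

noncomputable def fM12 (v : ℝ) : ℝ :=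
  Tm 0 0 0 0 0 0 0 v
  + Tm (-285071990490) 0 (47511998415/22) 0 (570143980980/11) 0 1 v
  + Tm 175100614778880 0 (-58366871592960/11) 0 (-700402459115520/11) 0 2 v
  + Tm (-5060905364915505) 0 (15115218836218515/44) 0 (30230437672437030/11) 0 3 v
  + Tm 26699282503434240 0 (-33704962760376320/11) 0 (-202229776562257920/11) 0 4 v
  + Tm (-113969449658203125) 0 (777479788818359375/44) 0 (932975746582031250/11) 0 5 v
  + Tm 92156256976896000 0 0 0 0 0 6 v

noncomputable def fM13 (v : ℝ) : ℝ :=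
  Tm 0 0 0 0 0 0 0 v
  + Tm 0 (617655979395/11) 0 (3705935876370/11) 0 (-47511998415/22) 1 v
  + Tm 0 (-1517538661416960/11) 0 (-4552615984250880/11) 0 (116733743185920/11) 2 v
  + Tm 0 (196497844870840695/22) 0 (197240314714648695/11) 0 (-45345656508655545/44) 3 v
  + Tm 0 (-876329031769784320/11) 0 (-1376998206713364480/11) 0 (134819851041505280/11) 4 v
  + Tm 0 (10107237254638671875/22) 0 (7201295477783203125/11) 0 (-3887398944091796875/44) 5 v
  + Tm 0 0 0 (-552937541861376000) 0 0 6 v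

noncomputable def fM14 (v : ℝ) : ℝ :=
  Tm 0 0 0 0 0 0 0 v
  + Tm (4323591855765/11) 0 (-47511998415/22) 0 (-665167977810/11) 0 1 v
  + Tm (-10622770629918720/11) 0 (233467486371840/11) 0 (3268544809205760/11) 0 2 v
  + Tm (1379939733158732865/22) 0 (-136036969525966635/44) 0 (-317419595560588815/11) 0 3 v
  + Tm (-6384321858623242240/11) 0 (539279404166021120/11) 0 (3774955829162147840/11) 0 4 v
  + Tm (82120192032470703125/22) 0 (-19436994720458984375/44) 0 (-27211792608642578125/11) 0 5 v
  + Tm (-3317625251168256000) 0 0 0 0 0 6 v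

lemma fM0_deriv (x : ℝ) : HasDerivAt fM0 (fM1 x) x := by
  unfold fM0 fM1
  exact ((((((Tm_hasDerivAt 0 0 (-26616594795/22) 0 0 0 0 x 0 (-26616594795/11) 0 0 0 0 (by norm_num) (by norm_num) (by norm_num) (by norm_num) (by norm_num) (by norm_num)).add
    (Tm_hasDerivAt 0 0 (47511998415/22) 0 0 0 1 x 0 (47511998415/11) 0 0 0 (-47511998415/22) (by norm_num) (by norm_num) (by norm_num) (by norm_num) (by norm_num) (by norm_num))).add
    (Tm_hasDerivAt 0 0 (-14249724510/11) 0 0 0 2 x 0 (-28499449020/11) 0 0 0 (28499449020/11) (by norm_num) (by norm_num) (by norm_num) (by norm_num) (by norm_num) (by norm_num))).add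
    (Tm_hasDerivAt (-42336000) 0 (28441950915/44) 0 0 0 3 x 0 (28441950915/22) 0 127008000 0 (-85325852745/44) (by norm_num) (by norm_num) (by norm_num) (by norm_num) (by norm_num) (by norm_num))).add
    (Tm_hasDerivAt 84672000 0 (-4017944665/22) 0 0 0 4 x 0 (-4017944665/11) 0 (-338688000) 0 (8035889330/11) (by norm_num) (by norm_num) (by norm_num) (by norm_num) (by norm_num) (by norm_num))).add
    (Tm_hasDerivAt (-84672000) 0 (3184557215/44) 0 0 0 5 x 0 (3184557215/22) 0 423360000 0 (-15922786075/44) (by norm_num) (by norm_num) (by norm_num) (by norm_num) (by norm_num) (by norm_num))).add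
    (Tm_hasDerivAt 42336000 0 0 0 0 0 6 x 0 0 0 (-254016000) 0 0 (by norm_num) (by norm_num) (by norm_num) (by norm_num) (by norm_num) (by norm_num))

lemma fM1_deriv (x : ℝ) : HasDerivAt fM1 (fM2 x) x := by
  unfold fM1 fM2
  exact ((((((Tm_hasDerivAt 0 (-26616594795/11) 0 0 0 0 0 x (-26616594795/11) 0 0 0 0 0 (by norm_num) (by norm_num) (by norm_num) (by norm_num) (by norm_num) (by norm_num)).add
    (Tm_hasDerivAt 0 (47511998415/11) 0 0 0 (-47511998415/22) 1 x (47511998415/11) 0 (-47511998415/22) 0 (-95023996830/11) 0 (by norm_num) (by norm_num) (by norm_num) (by norm_num) (by norm_num) (by norm_num))).add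
    (Tm_hasDerivAt 0 (-28499449020/11) 0 0 0 (28499449020/11) 2 x (-28499449020/11) 0 (56998898040/11) 0 (113997796080/11) 0 (by norm_num) (by norm_num) (by norm_num) (by norm_num) (by norm_num) (by norm_num))).add
    (Tm_hasDerivAt 0 (28441950915/22) 0 127008000 0 (-85325852745/44) 3 x (36824478915/22) 0 (-255977558235/44) 0 (-85325852745/11) 0 (by norm_num) (by norm_num) (by norm_num) (by norm_num) (by norm_num) (by norm_num))).add
    (Tm_hasDerivAt 0 (-4017944665/11) 0 (-338688000) 0 (8035889330/11) 4 x (-18920216665/11) 0 (32143557320/11) 0 (32143557320/11) 0 (by norm_num) (by norm_num) (by norm_num) (by norm_num) (by norm_num) (by norm_num))).add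
    (Tm_hasDerivAt 0 (3184557215/22) 0 423360000 0 (-15922786075/44) 5 x (49754157215/22) 0 (-79613930375/44) 0 (-15922786075/11) 0 (by norm_num) (by norm_num) (by norm_num) (by norm_num) (by norm_num) (by norm_num))).add
    (Tm_hasDerivAt 0 0 0 (-254016000) 0 0 6 x (-1524096000) 0 0 0 0 0 (by norm_num) (by norm_num) (by norm_num) (by norm_num) (by norm_num) (by norm_num))

lemma fM2_deriv (x : ℝ) : HasDerivAt fM2 (fM3 x) x := by
  unfold fM2 fM3
  exact ((((((Tm_hasDerivAt (-26616594795/11) 0 0 0 0 0 0 x 0 0 0 0 0 0 (by norm_num) (by norm_num) (by norm_num) (by norm_num) (by norm_num) (by norm_num)).add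
    (Tm_hasDerivAt (47511998415/11) 0 (-47511998415/22) 0 (-95023996830/11) 0 1 x 0 (-142535995245/11) 0 (-142535995245/11) 0 (47511998415/22) (by norm_num) (by norm_num) (by norm_num) (by norm_num) (by norm_num) (by norm_num))).add
    (Tm_hasDerivAt (-28499449020/11) 0 (56998898040/11) 0 (113997796080/11) 0 2 x 0 (341993388240/11) 0 (170996694120/11) 0 (-113997796080/11) (by norm_num) (by norm_num) (by norm_num) (by norm_num) (by norm_num) (by norm_num))).add
    (Tm_hasDerivAt (36824478915/22) 0 (-255977558235/44) 0 (-85325852745/11) 0 3 x 0 (-767932674705/22) 0 (-281125142235/22) 0 (767932674705/44) (by norm_num) (by norm_num) (by norm_num) (by norm_num) (by norm_num) (by norm_num))).add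
    (Tm_hasDerivAt (-18920216665/11) 0 (32143557320/11) 0 (32143557320/11) 0 4 x 0 (192861343920/11) 0 (107824423980/11) 0 (-128574229280/11) (by norm_num) (by norm_num) (by norm_num) (by norm_num) (by norm_num) (by norm_num))).add
    (Tm_hasDerivAt (49754157215/22) 0 (-79613930375/44) 0 (-15922786075/11) 0 5 x 0 (-238841791125/22) 0 (-280616358225/22) 0 (398069651875/44) (by norm_num) (by norm_num) (by norm_num) (by norm_num) (by norm_num) (by norm_num))).add
    (Tm_hasDerivAt (-1524096000) 0 0 0 0 0 6 x 0 0 0 9144576000 0 0 (by norm_num) (by norm_num) (by norm_num) (by norm_num) (by norm_num) (by norm_num))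

lemma fM3_deriv (x : ℝ) : HasDerivAt fM3 (fM4 x) x := by
  unfold fM3 fM4
  exact ((((((Tm_hasDerivAt 0 0 0 0 0 0 0 x 0 0 0 0 0 0 (by norm_num) (by norm_num) (by norm_num) (by norm_num) (by norm_num) (by norm_num)).add
    (Tm_hasDerivAt 0 (-142535995245/11) 0 (-142535995245/11) 0 (47511998415/22) 1 x (-285071990490/11) 0 (47511998415/22) 0 (190047993660/11) 0 (by norm_num) (by norm_num) (by norm_num) (by norm_num) (by norm_num) (by norm_num))).add
    (Tm_hasDerivAt 0 (341993388240/11) 0 (170996694120/11) 0 (-113997796080/11) 2 x (683986776480/11) 0 (-227995592160/11) 0 (-911982368640/11) 0 (by norm_num) (by norm_num) (by norm_num) (by norm_num) (by norm_num) (by norm_num))).add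
    (Tm_hasDerivAt 0 (-767932674705/22) 0 (-281125142235/22) 0 (767932674705/44) 3 x (-805654050705/11) 0 (2303798024115/44) 0 (1535865349410/11) 0 (by norm_num) (by norm_num) (by norm_num) (by norm_num) (by norm_num) (by norm_num))).add
    (Tm_hasDerivAt 0 (192861343920/11) 0 (107824423980/11) 0 (-128574229280/11) 4 x (624159039840/11) 0 (-514296917120/11) 0 (-1028593834240/11) 0 (by norm_num) (by norm_num) (by norm_num) (by norm_num) (by norm_num) (by norm_num))).add
    (Tm_hasDerivAt 0 (-238841791125/22) 0 (-280616358225/22) 0 (398069651875/44) 5 x (-820961791125/11) 0 (1990348259375/44) 0 (796139303750/11) 0 (by norm_num) (by norm_num) (by norm_num) (by norm_num) (by norm_num) (by norm_num))).add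
    (Tm_hasDerivAt 0 0 0 9144576000 0 0 6 x 54867456000 0 0 0 0 0 (by norm_num) (by norm_num) (by norm_num) (by norm_num) (by norm_num) (by norm_num))

lemma fM4_deriv (x : ℝ) : HasDerivAt fM4 (fM5 x) x := by
  unfold fM4 fM5
  exact ((((((Tm_hasDerivAt 0 0 0 0 0 0 0 x 0 0 0 0 0 0 (by norm_num) (by norm_num) (by norm_num) (by norm_num) (by norm_num) (by norm_num)).add
    (Tm_hasDerivAt (-285071990490/11) 0 (47511998415/22) 0 (190047993660/11) 0 1 x 0 (237559992075/11) 0 (475119984150/11) 0 (-47511998415/22) (by norm_num) (by norm_num) (by norm_num) (by norm_num) (by norm_num) (by norm_num))).add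
    (Tm_hasDerivAt (683986776480/11) 0 (-227995592160/11) 0 (-911982368640/11) 0 2 x 0 (-2279955921600/11) 0 (-2279955921600/11) 0 (455991184320/11) (by norm_num) (by norm_num) (by norm_num) (by norm_num) (by norm_num) (by norm_num))).add
    (Tm_hasDerivAt (-805654050705/11) 0 (2303798024115/44) 0 (1535865349410/11) 0 3 x 0 (11518990120575/22) 0 (3952827501525/11) 0 (-6911394072345/44) (by norm_num) (by norm_num) (by norm_num) (by norm_num) (by norm_num) (by norm_num))).add
    (Tm_hasDerivAt (624159039840/11) 0 (-514296917120/11) 0 (-1028593834240/11) 0 4 x 0 (-5142969171200/11) 0 (-3525229993600/11) 0 (2057187668480/11) (by norm_num) (by norm_num) (by norm_num) (by norm_num) (by norm_num) (by norm_num))).add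
    (Tm_hasDerivAt (-820961791125/11) 0 (1990348259375/44) 0 (796139303750/11) 0 5 x 0 (9951741296875/22) 0 (4900948259375/11) 0 (-9951741296875/44) (by norm_num) (by norm_num) (by norm_num) (by norm_num) (by norm_num) (by norm_num))).add
    (Tm_hasDerivAt 54867456000 0 0 0 0 0 6 x 0 0 0 (-329204736000) 0 0 (by norm_num) (by norm_num) (by norm_num) (by norm_num) (by norm_num) (by norm_num))

lemma fM5_deriv (x : ℝ) : HasDerivAt fM5 (fM6 x) x := by
  unfold fM5 fM6
  exact ((((((Tm_hasDerivAt 0 0 0 0 0 0 0 x 0 0 0 0 0 0 (by norm_num) (by norm_num) (by norm_num) (by norm_num) (by norm_num) (by norm_num)).add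
    (Tm_hasDerivAt 0 (237559992075/11) 0 (475119984150/11) 0 (-47511998415/22) 1 x (712679976225/11) 0 (-47511998415/22) 0 (-285071990490/11) 0 (by norm_num) (by norm_num) (by norm_num) (by norm_num) (by norm_num) (by norm_num))).add
    (Tm_hasDerivAt 0 (-2279955921600/11) 0 (-2279955921600/11) 0 (455991184320/11) 2 x (-6839867764800/11) 0 (911982368640/11) 0 (5471894211840/11) 0 (by norm_num) (by norm_num) (by norm_num) (by norm_num) (by norm_num) (by norm_num))).add
    (Tm_hasDerivAt 0 (11518990120575/22) 0 (3952827501525/11) 0 (-6911394072345/44) 3 x (35235955129725/22) 0 (-20734182217035/44) 0 (-20734182217035/11) 0 (by norm_num) (by norm_num) (by norm_num) (by norm_num) (by norm_num) (by norm_num))).add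
    (Tm_hasDerivAt 0 (-5142969171200/11) 0 (-3525229993600/11) 0 (2057187668480/11) 4 x (-19243889145600/11) 0 (8228750673920/11) 0 (24686252021760/11) 0 (by norm_num) (by norm_num) (by norm_num) (by norm_num) (by norm_num) (by norm_num))).add
    (Tm_hasDerivAt 0 (9951741296875/22) 0 (4900948259375/11) 0 (-9951741296875/44) 5 x (58961223890625/22) 0 (-49758706484375/44) 0 (-29855223890625/11) 0 (by norm_num) (by norm_num) (by norm_num) (by norm_num) (by norm_num) (by norm_num))).add
    (Tm_hasDerivAt 0 0 0 (-329204736000) 0 0 6 x (-1975228416000) 0 0 0 0 0 (by norm_num) (by norm_num) (by norm_num) (by norm_num) (by norm_num) (by norm_num))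

lemma fM6_deriv (x : ℝ) : HasDerivAt fM6 (fM7 x) x := by
  unfold fM6 fM7
  exact ((((((Tm_hasDerivAt 0 0 0 0 0 0 0 x 0 0 0 0 0 0 (by norm_num) (by norm_num) (by norm_num) (by norm_num) (by norm_num) (by norm_num)).add
    (Tm_hasDerivAt (712679976225/11) 0 (-47511998415/22) 0 (-285071990490/11) 0 1 x 0 (-332583988905/11) 0 (-997751966715/11) 0 (47511998415/22) (by norm_num) (by norm_num) (by norm_num) (by norm_num) (by norm_num) (by norm_num))).add
    (Tm_hasDerivAt (-6839867764800/11) 0 (911982368640/11) 0 (5471894211840/11) 0 2 x 0 (12767753160960/11) 0 (19151629741440/11) 0 (-1823964737280/11) (by norm_num) (by norm_num) (by norm_num) (by norm_num) (by norm_num) (by norm_num))).add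
    (Tm_hasDerivAt (35235955129725/22) 0 (-20734182217035/44) 0 (-20734182217035/11) 0 3 x 0 (-145139275519245/22) 0 (-147176229823245/22) 0 (62202546651105/44) (by norm_num) (by norm_num) (by norm_num) (by norm_num) (by norm_num) (by norm_num))).add
    (Tm_hasDerivAt (-19243889145600/11) 0 (8228750673920/11) 0 (24686252021760/11) 0 4 x 0 (115202509434880/11) 0 (101661808604160/11) 0 (-32915002695680/11) (by norm_num) (by norm_num) (by norm_num) (by norm_num) (by norm_num) (by norm_num))).add
    (Tm_hasDerivAt (58961223890625/22) 0 (-49758706484375/44) 0 (-29855223890625/11) 0 5 x 0 (-348310945390625/22) 0 (-354516567234375/22) 0 (248793532421875/44) (by norm_num) (by norm_num) (by norm_num) (by norm_num) (by norm_num) (by norm_num))).add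
    (Tm_hasDerivAt (-1975228416000) 0 0 0 0 0 6 x 0 0 0 11851370496000 0 0 (by norm_num) (by norm_num) (by norm_num) (by norm_num) (by norm_num) (by norm_num))

lemma fM7_deriv (x : ℝ) : HasDerivAt fM7 (fM8 x) x := by
  unfold fM7 fM8
  exact ((((((Tm_hasDerivAt 0 0 0 0 0 0 0 x 0 0 0 0 0 0 (by norm_num) (by norm_num) (by norm_num) (by norm_num) (by norm_num) (by norm_num)).add
    (Tm_hasDerivAt 0 (-332583988905/11) 0 (-997751966715/11) 0 (47511998415/22) 1 x (-1330335955620/11) 0 (47511998415/22) 0 (380095987320/11) 0 (by norm_num) (by norm_num) (by norm_num) (by norm_num) (by norm_num) (by norm_num))).add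
    (Tm_hasDerivAt 0 (12767753160960/11) 0 (19151629741440/11) 0 (-1823964737280/11) 2 x (51071012643840/11) 0 (-3647929474560/11) 0 (-29183435796480/11) 0 (by norm_num) (by norm_num) (by norm_num) (by norm_num) (by norm_num) (by norm_num))).add
    (Tm_hasDerivAt 0 (-145139275519245/22) 0 (-147176229823245/22) 0 (62202546651105/44) 3 x (-293333982494490/11) 0 (186607639953315/44) 0 (248810186604420/11) 0 (by norm_num) (by norm_num) (by norm_num) (by norm_num) (by norm_num) (by norm_num))).add
    (Tm_hasDerivAt 0 (115202509434880/11) 0 (101661808604160/11) 0 (-32915002695680/11) 4 x (521849743851520/11) 0 (-131660010782720/11) 0 (-526640043130880/11) 0 (by norm_num) (by norm_num) (by norm_num) (by norm_num) (by norm_num) (by norm_num))).add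
    (Tm_hasDerivAt 0 (-348310945390625/22) 0 (-354516567234375/22) 0 (248793532421875/44) 5 x (-1060446890781250/11) 0 (1243967662109375/44) 0 (995174129687500/11) 0 (by norm_num) (by norm_num) (by norm_num) (by norm_num) (by norm_num) (by norm_num))).add
    (Tm_hasDerivAt 0 0 0 11851370496000 0 0 6 x 71108222976000 0 0 0 0 0 (by norm_num) (by norm_num) (by norm_num) (by norm_num) (by norm_num) (by norm_num))

lemma fM8_deriv (x : ℝ) : HasDerivAt fM8 (fM9 x) x := by
  unfold fM8 fM9
  exact ((((((Tm_hasDerivAt 0 0 0 0 0 0 0 x 0 0 0 0 0 0 (by norm_num) (by norm_num) (by norm_num) (by norm_num) (by norm_num) (by norm_num)).add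
    (Tm_hasDerivAt (-1330335955620/11) 0 (47511998415/22) 0 (380095987320/11) 0 1 x 0 (427607985735/11) 0 (1710431942940/11) 0 (-47511998415/22) (by norm_num) (by norm_num) (by norm_num) (by norm_num) (by norm_num) (by norm_num))).add
    (Tm_hasDerivAt (51071012643840/11) 0 (-3647929474560/11) 0 (-29183435796480/11) 0 2 x 0 (-65662730542080/11) 0 (-131325461084160/11) 0 (7295858949120/11) (by norm_num) (by norm_num) (by norm_num) (by norm_num) (by norm_num) (by norm_num))).add
    (Tm_hasDerivAt (-293333982494490/11) 0 (186607639953315/44) 0 (248810186604420/11) 0 3 x 0 (1679468759579835/22) 0 (1128812134087890/11) 0 (-559822919859945/44) (by norm_num) (by norm_num) (by norm_num) (by norm_num) (by norm_num) (by norm_num))).add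
    (Tm_hasDerivAt (521849743851520/11) 0 (-131660010782720/11) 0 (-526640043130880/11) 0 4 x 0 (-2369880194088960/11) 0 (-2614039018536960/11) 0 (526640043130880/11) (by norm_num) (by norm_num) (by norm_num) (by norm_num) (by norm_num) (by norm_num))).add
    (Tm_hasDerivAt (-1060446890781250/11) 0 (1243967662109375/44) 0 (995174129687500/11) 0 5 x 0 (11195708958984375/22) 0 (6297408583593750/11) 0 (-6219838310546875/44) (by norm_num) (by norm_num) (by norm_num) (by norm_num) (by norm_num) (by norm_num))).add
    (Tm_hasDerivAt 71108222976000 0 0 0 0 0 6 x 0 0 0 (-426649337856000) 0 0 (by norm_num) (by norm_num) (by norm_num) (by norm_num) (by norm_num) (by norm_num))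

lemma fM9_deriv (x : ℝ) : HasDerivAt fM9 (fM10 x) x := by
  unfold fM9 fM10
  exact ((((((Tm_hasDerivAt 0 0 0 0 0 0 0 x 0 0 0 0 0 0 (by norm_num) (by norm_num) (by norm_num) (by norm_num) (by norm_num) (by norm_num)).add
    (Tm_hasDerivAt 0 (427607985735/11) 0 (1710431942940/11) 0 (-47511998415/22) 1 x (2138039928675/11) 0 (-47511998415/22) 0 (-475119984150/11) 0 (by norm_num) (by norm_num) (by norm_num) (by norm_num) (by norm_num) (by norm_num))).add
    (Tm_hasDerivAt 0 (-65662730542080/11) 0 (-131325461084160/11) 0 (7295858949120/11) 2 x (-328313652710400/11) 0 (14591717898240/11) 0 (145917178982400/11) 0 (by norm_num) (by norm_num) (by norm_num) (by norm_num) (by norm_num) (by norm_num))).add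
    (Tm_hasDerivAt 0 (1679468759579835/22) 0 (1128812134087890/11) 0 (-559822919859945/44) 3 x (8452341564107175/22) 0 (-1679468759579835/44) 0 (-2799114599299725/11) 0 (by norm_num) (by norm_num) (by norm_num) (by norm_num) (by norm_num) (by norm_num))).add
    (Tm_hasDerivAt 0 (-2369880194088960/11) 0 (-2614039018536960/11) 0 (526640043130880/11) 4 x (-12826036268236800/11) 0 (2106560172523520/11) 0 (10532800862617600/11) 0 (by norm_num) (by norm_num) (by norm_num) (by norm_num) (by norm_num) (by norm_num))).add
    (Tm_hasDerivAt 0 (11195708958984375/22) 0 (6297408583593750/11) 0 (-6219838310546875/44) 5 x (74169794794921875/22) 0 (-31099191552734375/44) 0 (-31099191552734375/11) 0 (by norm_num) (by norm_num) (by norm_num) (by norm_num) (by norm_num) (by norm_num))).add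
    (Tm_hasDerivAt 0 0 0 (-426649337856000) 0 0 6 x (-2559896027136000) 0 0 0 0 0 (by norm_num) (by norm_num) (by norm_num) (by norm_num) (by norm_num) (by norm_num))

lemma fM10_deriv (x : ℝ) : HasDerivAt fM10 (fM11 x) x := by
  unfold fM10 fM11
  exact ((((((Tm_hasDerivAt 0 0 0 0 0 0 0 x 0 0 0 0 0 0 (by norm_num) (by norm_num) (by norm_num) (by norm_num) (by norm_num) (by norm_num)).add
    (Tm_hasDerivAt (2138039928675/11) 0 (-47511998415/22) 0 (-475119984150/11) 0 1 x 0 (-47511998415) 0 (-237559992075) 0 (47511998415/22) (by norm_num) (by norm_num) (by norm_num) (by norm_num) (by norm_num) (by norm_num))).add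
    (Tm_hasDerivAt (-328313652710400/11) 0 (14591717898240/11) 0 (145917178982400/11) 0 2 x 0 29183435796480 0 72958589491200 0 (-29183435796480/11) (by norm_num) (by norm_num) (by norm_num) (by norm_num) (by norm_num) (by norm_num))).add
    (Tm_hasDerivAt (8452341564107175/22) 0 (-1679468759579835/44) 0 (-2799114599299725/11) 0 3 x 0 (-1679468759579835/2) 0 (-2814113990083725/2) 0 (5038406278739505/44) (by norm_num) (by norm_num) (by norm_num) (by norm_num) (by norm_num) (by norm_num))).add
    (Tm_hasDerivAt (-12826036268236800/11) 0 (2106560172523520/11) 0 (10532800862617600/11) 0 4 x 0 4213120345047040 0 5621540539596800 0 (-8426240690094080/11) (by norm_num) (by norm_num) (by norm_num) (by norm_num) (by norm_num) (by norm_num))).add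
    (Tm_hasDerivAt (74169794794921875/22) 0 (-31099191552734375/44) 0 (-31099191552734375/11) 0 5 x 0 (-31099191552734375/2) 0 (-39367941552734375/2) 0 (155495957763671875/44) (by norm_num) (by norm_num) (by norm_num) (by norm_num) (by norm_num) (by norm_num))).add
    (Tm_hasDerivAt (-2559896027136000) 0 0 0 0 0 6 x 0 0 0 15359376162816000 0 0 (by norm_num) (by norm_num) (by norm_num) (by norm_num) (by norm_num) (by norm_num))

lemma fM11_deriv (x : ℝ) : HasDerivAt fM11 (fM12 x) x := by
  unfold fM11 fM12
  exact ((((((Tm_hasDerivAt 0 0 0 0 0 0 0 x 0 0 0 0 0 0 (by norm_num) (by norm_num) (by norm_num) (by norm_num) (by norm_num) (by norm_num)).add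
    (Tm_hasDerivAt 0 (-47511998415) 0 (-237559992075) 0 (47511998415/22) 1 x (-285071990490) 0 (47511998415/22) 0 (570143980980/11) 0 (by norm_num) (by norm_num) (by norm_num) (by norm_num) (by norm_num) (by norm_num))).add
    (Tm_hasDerivAt 0 29183435796480 0 72958589491200 0 (-29183435796480/11) 2 x 175100614778880 0 (-58366871592960/11) 0 (-700402459115520/11) 0 (by norm_num) (by norm_num) (by norm_num) (by norm_num) (by norm_num) (by norm_num))).add
    (Tm_hasDerivAt 0 (-1679468759579835/2) 0 (-2814113990083725/2) 0 (5038406278739505/44) 3 x (-5060905364915505) 0 (15115218836218515/44) 0 (30230437672437030/11) 0 (by norm_num) (by norm_num) (by norm_num) (by norm_num) (by norm_num) (by norm_num))).add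
    (Tm_hasDerivAt 0 4213120345047040 0 5621540539596800 0 (-8426240690094080/11) 4 x 26699282503434240 0 (-33704962760376320/11) 0 (-202229776562257920/11) 0 (by norm_num) (by norm_num) (by norm_num) (by norm_num) (by norm_num) (by norm_num))).add
    (Tm_hasDerivAt 0 (-31099191552734375/2) 0 (-39367941552734375/2) 0 (155495957763671875/44) 5 x (-113969449658203125) 0 (777479788818359375/44) 0 (932975746582031250/11) 0 (by norm_num) (by norm_num) (by norm_num) (by norm_num) (by norm_num) (by norm_num))).add
    (Tm_hasDerivAt 0 0 0 15359376162816000 0 0 6 x 92156256976896000 0 0 0 0 0 (by norm_num) (by norm_num) (by norm_num) (by norm_num) (by norm_num) (by norm_num))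

lemma fM12_deriv (x : ℝ) : HasDerivAt fM12 (fM13 x) x := by
  unfold fM12 fM13
  exact ((((((Tm_hasDerivAt 0 0 0 0 0 0 0 x 0 0 0 0 0 0 (by norm_num) (by norm_num) (by norm_num) (by norm_num) (by norm_num) (by norm_num)).add
    (Tm_hasDerivAt (-285071990490) 0 (47511998415/22) 0 (570143980980/11) 0 1 x 0 (617655979395/11) 0 (3705935876370/11) 0 (-47511998415/22) (by norm_num) (by norm_num) (by norm_num) (by norm_num) (by norm_num) (by norm_num))).add
    (Tm_hasDerivAt 175100614778880 0 (-58366871592960/11) 0 (-700402459115520/11) 0 2 x 0 (-1517538661416960/11) 0 (-4552615984250880/11) 0 (116733743185920/11) (by norm_num) (by norm_num) (by norm_num) (by norm_num) (by norm_num) (by norm_num))).add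
    (Tm_hasDerivAt (-5060905364915505) 0 (15115218836218515/44) 0 (30230437672437030/11) 0 3 x 0 (196497844870840695/22) 0 (197240314714648695/11) 0 (-45345656508655545/44) (by norm_num) (by norm_num) (by norm_num) (by norm_num) (by norm_num) (by norm_num))).add
    (Tm_hasDerivAt 26699282503434240 0 (-33704962760376320/11) 0 (-202229776562257920/11) 0 4 x 0 (-876329031769784320/11) 0 (-1376998206713364480/11) 0 (134819851041505280/11) (by norm_num) (by norm_num) (by norm_num) (by norm_num) (by norm_num) (by norm_num))).add
    (Tm_hasDerivAt (-113969449658203125) 0 (777479788818359375/44) 0 (932975746582031250/11) 0 5 x 0 (10107237254638671875/22) 0 (7201295477783203125/11) 0 (-3887398944091796875/44) (by norm_num) (by norm_num) (by norm_num) (by norm_num) (by norm_num) (by norm_num))).add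
    (Tm_hasDerivAt 92156256976896000 0 0 0 0 0 6 x 0 0 0 (-552937541861376000) 0 0 (by norm_num) (by norm_num) (by norm_num) (by norm_num) (by norm_num) (by norm_num))

lemma fM13_deriv (x : ℝ) : HasDerivAt fM13 (fM14 x) x := by
  unfold fM13 fM14
  exact ((((((Tm_hasDerivAt 0 0 0 0 0 0 0 x 0 0 0 0 0 0 (by norm_num) (by norm_num) (by norm_num) (by norm_num) (by norm_num) (by norm_num)).add
    (Tm_hasDerivAt 0 (617655979395/11) 0 (3705935876370/11) 0 (-47511998415/22) 1 x (4323591855765/11) 0 (-47511998415/22) 0 (-665167977810/11) 0 (by norm_num) (by norm_num) (by norm_num) (by norm_num) (by norm_num) (by norm_num))).add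
    (Tm_hasDerivAt 0 (-1517538661416960/11) 0 (-4552615984250880/11) 0 (116733743185920/11) 2 x (-10622770629918720/11) 0 (233467486371840/11) 0 (3268544809205760/11) 0 (by norm_num) (by norm_num) (by norm_num) (by norm_num) (by norm_num) (by norm_num))).add
    (Tm_hasDerivAt 0 (196497844870840695/22) 0 (197240314714648695/11) 0 (-45345656508655545/44) 3 x (1379939733158732865/22) 0 (-136036969525966635/44) 0 (-317419595560588815/11) 0 (by norm_num) (by norm_num) (by norm_num) (by norm_num) (by norm_num) (by norm_num))).add
    (Tm_hasDerivAt 0 (-876329031769784320/11) 0 (-1376998206713364480/11) 0 (134819851041505280/11) 4 x (-6384321858623242240/11) 0 (539279404166021120/11) 0 (3774955829162147840/11) 0 (by norm_num) (by norm_num) (by norm_num) (by norm_num) (by norm_num) (by norm_num))).add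
    (Tm_hasDerivAt 0 (10107237254638671875/22) 0 (7201295477783203125/11) 0 (-3887398944091796875/44) 5 x (82120192032470703125/22) 0 (-19436994720458984375/44) 0 (-27211792608642578125/11) 0 (by norm_num) (by norm_num) (by norm_num) (by norm_num) (by norm_num) (by norm_num))).add
    (Tm_hasDerivAt 0 0 0 (-552937541861376000) 0 0 6 x (-3317625251168256000) 0 0 0 0 0 (by norm_num) (by norm_num) (by norm_num) (by norm_num) (by norm_num) (by norm_num))

lemma fM0_tends : Tendsto fM0 (nhdsWithin 0 (Set.Ioi 0)) (nhds (0 : ℝ)) := by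
  have hc : Continuous fM0 := by unfold fM0 Tm; fun_prop
  have h0 : fM0 0 = (0 : ℝ) := by unfold fM0 Tm; norm_num
  have h := (hc.tendsto 0).mono_left (nhdsWithin_le_nhds (s := Set.Ioi 0))
  rwa [h0] at h

lemma fM1_tends : Tendsto fM1 (nhdsWithin 0 (Set.Ioi 0)) (nhds (0 : ℝ)) := by
  have hc : Continuous fM1 := by unfold fM1 Tm; fun_prop
  have h0 : fM1 0 = (0 : ℝ) := by unfold fM1 Tm; norm_num
  have h := (hc.tendsto 0).mono_left (nhdsWithin_le_nhds (s := Set.Ioi 0))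
  rwa [h0] at h

lemma fM2_tends : Tendsto fM2 (nhdsWithin 0 (Set.Ioi 0)) (nhds (0 : ℝ)) := by
  have hc : Continuous fM2 := by unfold fM2 Tm; fun_prop
  have h0 : fM2 0 = (0 : ℝ) := by unfold fM2 Tm; norm_num
  have h := (hc.tendsto 0).mono_left (nhdsWithin_le_nhds (s := Set.Ioi 0))
  rwa [h0] at h

lemma fM3_tends : Tendsto fM3 (nhdsWithin 0 (Set.Ioi 0)) (nhds (0 : ℝ)) := by
  have hc : Continuous fM3 := by unfold fM3 Tm; fun_prop
  have h0 : fM3 0 = (0 : ℝ) := by unfold fM3 Tm; norm_num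
  have h := (hc.tendsto 0).mono_left (nhdsWithin_le_nhds (s := Set.Ioi 0))
  rwa [h0] at h

lemma fM4_tends : Tendsto fM4 (nhdsWithin 0 (Set.Ioi 0)) (nhds (0 : ℝ)) := by
  have hc : Continuous fM4 := by unfold fM4 Tm; fun_prop
  have h0 : fM4 0 = (0 : ℝ) := by unfold fM4 Tm; norm_num
  have h := (hc.tendsto 0).mono_left (nhdsWithin_le_nhds (s := Set.Ioi 0))
  rwa [h0] at h

lemma fM5_tends : Tendsto fM5 (nhdsWithin 0 (Set.Ioi 0)) (nhds (0 : ℝ)) := by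
  have hc : Continuous fM5 := by unfold fM5 Tm; fun_prop
  have h0 : fM5 0 = (0 : ℝ) := by unfold fM5 Tm; norm_num
  have h := (hc.tendsto 0).mono_left (nhdsWithin_le_nhds (s := Set.Ioi 0))
  rwa [h0] at h

lemma fM6_tends : Tendsto fM6 (nhdsWithin 0 (Set.Ioi 0)) (nhds (0 : ℝ)) := by
  have hc : Continuous fM6 := by unfold fM6 Tm; fun_prop
  have h0 : fM6 0 = (0 : ℝ) := by unfold fM6 Tm; norm_num
  have h := (hc.tendsto 0).mono_left (nhdsWithin_le_nhds (s := Set.Ioi 0))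
  rwa [h0] at h

lemma fM7_tends : Tendsto fM7 (nhdsWithin 0 (Set.Ioi 0)) (nhds (0 : ℝ)) := by
  have hc : Continuous fM7 := by unfold fM7 Tm; fun_prop
  have h0 : fM7 0 = (0 : ℝ) := by unfold fM7 Tm; norm_num
  have h := (hc.tendsto 0).mono_left (nhdsWithin_le_nhds (s := Set.Ioi 0))
  rwa [h0] at h

lemma fM8_tends : Tendsto fM8 (nhdsWithin 0 (Set.Ioi 0)) (nhds (0 : ℝ)) := by
  have hc : Continuous fM8 := by unfold fM8 Tm; fun_prop
  have h0 : fM8 0 = (0 : ℝ) := by unfold fM8 Tm; norm_num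
  have h := (hc.tendsto 0).mono_left (nhdsWithin_le_nhds (s := Set.Ioi 0))
  rwa [h0] at h

lemma fM9_tends : Tendsto fM9 (nhdsWithin 0 (Set.Ioi 0)) (nhds (0 : ℝ)) := by
  have hc : Continuous fM9 := by unfold fM9 Tm; fun_prop
  have h0 : fM9 0 = (0 : ℝ) := by unfold fM9 Tm; norm_num
  have h := (hc.tendsto 0).mono_left (nhdsWithin_le_nhds (s := Set.Ioi 0))
  rwa [h0] at h

lemma fM10_tends : Tendsto fM10 (nhdsWithin 0 (Set.Ioi 0)) (nhds (0 : ℝ)) := by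
  have hc : Continuous fM10 := by unfold fM10 Tm; fun_prop
  have h0 : fM10 0 = (0 : ℝ) := by unfold fM10 Tm; norm_num
  have h := (hc.tendsto 0).mono_left (nhdsWithin_le_nhds (s := Set.Ioi 0))
  rwa [h0] at h

lemma fM11_tends : Tendsto fM11 (nhdsWithin 0 (Set.Ioi 0)) (nhds (0 : ℝ)) := by
  have hc : Continuous fM11 := by unfold fM11 Tm; fun_prop
  have h0 : fM11 0 = (0 : ℝ) := by unfold fM11 Tm; norm_num
  have h := (hc.tendsto 0).mono_left (nhdsWithin_le_nhds (s := Set.Ioi 0))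
  rwa [h0] at h

lemma fM12_tends : Tendsto fM12 (nhdsWithin 0 (Set.Ioi 0)) (nhds (0 : ℝ)) := by
  have hc : Continuous fM12 := by unfold fM12 Tm; fun_prop
  have h0 : fM12 0 = (0 : ℝ) := by unfold fM12 Tm; norm_num
  have h := (hc.tendsto 0).mono_left (nhdsWithin_le_nhds (s := Set.Ioi 0))
  rwa [h0] at h

lemma fM13_tends : Tendsto fM13 (nhdsWithin 0 (Set.Ioi 0)) (nhds (0 : ℝ)) := by
  have hc : Continuous fM13 := by unfold fM13 Tm; fun_prop
  have h0 : fM13 0 = (0 : ℝ) := by unfold fM13 Tm; norm_num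
  have h := (hc.tendsto 0).mono_left (nhdsWithin_le_nhds (s := Set.Ioi 0))
  rwa [h0] at h

lemma fM14_tends : Tendsto fM14 (nhdsWithin 0 (Set.Ioi 0)) (nhds ((-103522925972491200) : ℝ)) := by
  have hc : Continuous fM14 := by unfold fM14 Tm; fun_prop
  have h0 : fM14 0 = ((-103522925972491200) : ℝ) := by unfold fM14 Tm; norm_num
  have h := (hc.tendsto 0).mono_left (nhdsWithin_le_nhds (s := Set.Ioi 0))
  rwa [h0] at h

lemma fM13_lim : Tendsto (fun v => fM13 v / v^1) (nhdsWithin 0 (Set.Ioi 0)) (nhds ((-103522925972491200) : ℝ)) := by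
  have hdiv : Tendsto (fun x => fM14 x / ((1:ℝ)*x^0)) (nhdsWithin 0 (Set.Ioi 0)) (nhds ((-103522925972491200) : ℝ)) := by
    exact fM14_tends.congr fun x => by ring
  have hgg : ∀ x ∈ Set.Ioo (0:ℝ) 1, HasDerivAt (fun v : ℝ => v^1) ((1:ℝ)*x^0) x := by
    intro x _; have h := hasDerivAt_pow 1 x; norm_num at h ⊢; exact h
  have hga : Tendsto (fun v : ℝ => v^1) (nhdsWithin 0 (Set.Ioi 0)) (nhds 0) := by
    have h := ((continuous_pow 1).tendsto (0:ℝ)).mono_left (nhdsWithin_le_nhds (s := Set.Ioi 0))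
    norm_num at h; exact h.congr fun x => (pow_one x).symm
  exact HasDerivAt.lhopital_zero_right_on_Ioo one_pos (fun x _ => fM13_deriv x) hgg
    (fun x hx => by have h1 : (0:ℝ) < x := hx.1; positivity) fM13_tends hga hdiv

lemma fM12_lim : Tendsto (fun v => fM12 v / v^2) (nhdsWithin 0 (Set.Ioi 0)) (nhds ((-51761462986245600) : ℝ)) := by
  have hdiv : Tendsto (fun x => fM13 x / ((2:ℝ)*x^1)) (nhdsWithin 0 (Set.Ioi 0)) (nhds ((-51761462986245600) : ℝ)) := by
    have h := fM13_lim.div_const (2:ℝ)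
    rw [show ((-103522925972491200):ℝ)/2 = ((-51761462986245600):ℝ) by norm_num] at h
    exact h.congr fun x => by rw [div_div, mul_comm (x^1) ((2:ℝ))]
  have hgg : ∀ x ∈ Set.Ioo (0:ℝ) 1, HasDerivAt (fun v : ℝ => v^2) ((2:ℝ)*x^1) x := by
    intro x _; have h := hasDerivAt_pow 2 x; norm_num at h ⊢; exact h
  have hga : Tendsto (fun v : ℝ => v^2) (nhdsWithin 0 (Set.Ioi 0)) (nhds 0) := by
    have h := ((continuous_pow 2).tendsto (0:ℝ)).mono_left (nhdsWithin_le_nhds (s := Set.Ioi 0))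
    norm_num at h; exact h
  exact HasDerivAt.lhopital_zero_right_on_Ioo one_pos (fun x _ => fM12_deriv x) hgg
    (fun x hx => by have h1 : (0:ℝ) < x := hx.1; positivity) fM12_tends hga hdiv

lemma fM11_lim : Tendsto (fun v => fM11 v / v^3) (nhdsWithin 0 (Set.Ioi 0)) (nhds ((-17253820995415200) : ℝ)) := by
  have hdiv : Tendsto (fun x => fM12 x / ((3:ℝ)*x^2)) (nhdsWithin 0 (Set.Ioi 0)) (nhds ((-17253820995415200) : ℝ)) := by
    have h := fM12_lim.div_const (3:ℝ)
    rw [show ((-51761462986245600):ℝ)/3 = ((-17253820995415200):ℝ) by norm_num] at h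
    exact h.congr fun x => by rw [div_div, mul_comm (x^2) ((3:ℝ))]
  have hgg : ∀ x ∈ Set.Ioo (0:ℝ) 1, HasDerivAt (fun v : ℝ => v^3) ((3:ℝ)*x^2) x := by
    intro x _; have h := hasDerivAt_pow 3 x; norm_num at h ⊢; exact h
  have hga : Tendsto (fun v : ℝ => v^3) (nhdsWithin 0 (Set.Ioi 0)) (nhds 0) := by
    have h := ((continuous_pow 3).tendsto (0:ℝ)).mono_left (nhdsWithin_le_nhds (s := Set.Ioi 0))
    norm_num at h; exact h
  exact HasDerivAt.lhopital_zero_right_on_Ioo one_pos (fun x _ => fM11_deriv x) hgg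
    (fun x hx => by have h1 : (0:ℝ) < x := hx.1; positivity) fM11_tends hga hdiv

lemma fM10_lim : Tendsto (fun v => fM10 v / v^4) (nhdsWithin 0 (Set.Ioi 0)) (nhds ((-4313455248853800) : ℝ)) := by
  have hdiv : Tendsto (fun x => fM11 x / ((4:ℝ)*x^3)) (nhdsWithin 0 (Set.Ioi 0)) (nhds ((-4313455248853800) : ℝ)) := by
    have h := fM11_lim.div_const (4:ℝ)
    rw [show ((-17253820995415200):ℝ)/4 = ((-4313455248853800):ℝ) by norm_num] at h
    exact h.congr fun x => by rw [div_div, mul_comm (x^3) ((4:ℝ))]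
  have hgg : ∀ x ∈ Set.Ioo (0:ℝ) 1, HasDerivAt (fun v : ℝ => v^4) ((4:ℝ)*x^3) x := by
    intro x _; have h := hasDerivAt_pow 4 x; norm_num at h ⊢; exact h
  have hga : Tendsto (fun v : ℝ => v^4) (nhdsWithin 0 (Set.Ioi 0)) (nhds 0) := by
    have h := ((continuous_pow 4).tendsto (0:ℝ)).mono_left (nhdsWithin_le_nhds (s := Set.Ioi 0))
    norm_num at h; exact h
  exact HasDerivAt.lhopital_zero_right_on_Ioo one_pos (fun x _ => fM10_deriv x) hgg
    (fun x hx => by have h1 : (0:ℝ) < x := hx.1; positivity) fM10_tends hga hdiv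

lemma fM9_lim : Tendsto (fun v => fM9 v / v^5) (nhdsWithin 0 (Set.Ioi 0)) (nhds ((-862691049770760) : ℝ)) := by
  have hdiv : Tendsto (fun x => fM10 x / ((5:ℝ)*x^4)) (nhdsWithin 0 (Set.Ioi 0)) (nhds ((-862691049770760) : ℝ)) := by
    have h := fM10_lim.div_const (5:ℝ)
    rw [show ((-4313455248853800):ℝ)/5 = ((-862691049770760):ℝ) by norm_num] at h
    exact h.congr fun x => by rw [div_div, mul_comm (x^4) ((5:ℝ))]
  have hgg : ∀ x ∈ Set.Ioo (0:ℝ) 1, HasDerivAt (fun v : ℝ => v^5) ((5:ℝ)*x^4) x := by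
    intro x _; have h := hasDerivAt_pow 5 x; norm_num at h ⊢; exact h
  have hga : Tendsto (fun v : ℝ => v^5) (nhdsWithin 0 (Set.Ioi 0)) (nhds 0) := by
    have h := ((continuous_pow 5).tendsto (0:ℝ)).mono_left (nhdsWithin_le_nhds (s := Set.Ioi 0))
    norm_num at h; exact h
  exact HasDerivAt.lhopital_zero_right_on_Ioo one_pos (fun x _ => fM9_deriv x) hgg
    (fun x hx => by have h1 : (0:ℝ) < x := hx.1; positivity) fM9_tends hga hdiv

lemma fM8_lim : Tendsto (fun v => fM8 v / v^6) (nhdsWithin 0 (Set.Ioi 0)) (nhds ((-143781841628460) : ℝ)) := by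
  have hdiv : Tendsto (fun x => fM9 x / ((6:ℝ)*x^5)) (nhdsWithin 0 (Set.Ioi 0)) (nhds ((-143781841628460) : ℝ)) := by
    have h := fM9_lim.div_const (6:ℝ)
    rw [show ((-862691049770760):ℝ)/6 = ((-143781841628460):ℝ) by norm_num] at h
    exact h.congr fun x => by rw [div_div, mul_comm (x^5) ((6:ℝ))]
  have hgg : ∀ x ∈ Set.Ioo (0:ℝ) 1, HasDerivAt (fun v : ℝ => v^6) ((6:ℝ)*x^5) x := by
    intro x _; have h := hasDerivAt_pow 6 x; norm_num at h ⊢; exact h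
  have hga : Tendsto (fun v : ℝ => v^6) (nhdsWithin 0 (Set.Ioi 0)) (nhds 0) := by
    have h := ((continuous_pow 6).tendsto (0:ℝ)).mono_left (nhdsWithin_le_nhds (s := Set.Ioi 0))
    norm_num at h; exact h
  exact HasDerivAt.lhopital_zero_right_on_Ioo one_pos (fun x _ => fM8_deriv x) hgg
    (fun x hx => by have h1 : (0:ℝ) < x := hx.1; positivity) fM8_tends hga hdiv

lemma fM7_lim : Tendsto (fun v => fM7 v / v^7) (nhdsWithin 0 (Set.Ioi 0)) (nhds ((-20540263089780) : ℝ)) := by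
  have hdiv : Tendsto (fun x => fM8 x / ((7:ℝ)*x^6)) (nhdsWithin 0 (Set.Ioi 0)) (nhds ((-20540263089780) : ℝ)) := by
    have h := fM8_lim.div_const (7:ℝ)
    rw [show ((-143781841628460):ℝ)/7 = ((-20540263089780):ℝ) by norm_num] at h
    exact h.congr fun x => by rw [div_div, mul_comm (x^6) ((7:ℝ))]
  have hgg : ∀ x ∈ Set.Ioo (0:ℝ) 1, HasDerivAt (fun v : ℝ => v^7) ((7:ℝ)*x^6) x := by
    intro x _; have h := hasDerivAt_pow 7 x; norm_num at h ⊢; exact h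
  have hga : Tendsto (fun v : ℝ => v^7) (nhdsWithin 0 (Set.Ioi 0)) (nhds 0) := by
    have h := ((continuous_pow 7).tendsto (0:ℝ)).mono_left (nhdsWithin_le_nhds (s := Set.Ioi 0))
    norm_num at h; exact h
  exact HasDerivAt.lhopital_zero_right_on_Ioo one_pos (fun x _ => fM7_deriv x) hgg
    (fun x hx => by have h1 : (0:ℝ) < x := hx.1; positivity) fM7_tends hga hdiv

lemma fM6_lim : Tendsto (fun v => fM6 v / v^8) (nhdsWithin 0 (Set.Ioi 0)) (nhds ((-5135065772445/2) : ℝ)) := by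
  have hdiv : Tendsto (fun x => fM7 x / ((8:ℝ)*x^7)) (nhdsWithin 0 (Set.Ioi 0)) (nhds ((-5135065772445/2) : ℝ)) := by
    have h := fM7_lim.div_const (8:ℝ)
    rw [show ((-20540263089780):ℝ)/8 = ((-5135065772445/2):ℝ) by norm_num] at h
    exact h.congr fun x => by rw [div_div, mul_comm (x^7) ((8:ℝ))]
  have hgg : ∀ x ∈ Set.Ioo (0:ℝ) 1, HasDerivAt (fun v : ℝ => v^8) ((8:ℝ)*x^7) x := by
    intro x _; have h := hasDerivAt_pow 8 x; norm_num at h ⊢; exact h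
  have hga : Tendsto (fun v : ℝ => v^8) (nhdsWithin 0 (Set.Ioi 0)) (nhds 0) := by
    have h := ((continuous_pow 8).tendsto (0:ℝ)).mono_left (nhdsWithin_le_nhds (s := Set.Ioi 0))
    norm_num at h; exact h
  exact HasDerivAt.lhopital_zero_right_on_Ioo one_pos (fun x _ => fM6_deriv x) hgg
    (fun x hx => by have h1 : (0:ℝ) < x := hx.1; positivity) fM6_tends hga hdiv

lemma fM5_lim : Tendsto (fun v => fM5 v / v^9) (nhdsWithin 0 (Set.Ioi 0)) (nhds ((-570562863605/2) : ℝ)) := by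
  have hdiv : Tendsto (fun x => fM6 x / ((9:ℝ)*x^8)) (nhdsWithin 0 (Set.Ioi 0)) (nhds ((-570562863605/2) : ℝ)) := by
    have h := fM6_lim.div_const (9:ℝ)
    rw [show ((-5135065772445/2):ℝ)/9 = ((-570562863605/2):ℝ) by norm_num] at h
    exact h.congr fun x => by rw [div_div, mul_comm (x^8) ((9:ℝ))]
  have hgg : ∀ x ∈ Set.Ioo (0:ℝ) 1, HasDerivAt (fun v : ℝ => v^9) ((9:ℝ)*x^8) x := by
    intro x _; have h := hasDerivAt_pow 9 x; norm_num at h ⊢; exact h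
  have hga : Tendsto (fun v : ℝ => v^9) (nhdsWithin 0 (Set.Ioi 0)) (nhds 0) := by
    have h := ((continuous_pow 9).tendsto (0:ℝ)).mono_left (nhdsWithin_le_nhds (s := Set.Ioi 0))
    norm_num at h; exact h
  exact HasDerivAt.lhopital_zero_right_on_Ioo one_pos (fun x _ => fM5_deriv x) hgg
    (fun x hx => by have h1 : (0:ℝ) < x := hx.1; positivity) fM5_tends hga hdiv

lemma fM4_lim : Tendsto (fun v => fM4 v / v^10) (nhdsWithin 0 (Set.Ioi 0)) (nhds ((-114112572721/4) : ℝ)) := by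
  have hdiv : Tendsto (fun x => fM5 x / ((10:ℝ)*x^9)) (nhdsWithin 0 (Set.Ioi 0)) (nhds ((-114112572721/4) : ℝ)) := by
    have h := fM5_lim.div_const (10:ℝ)
    rw [show ((-570562863605/2):ℝ)/10 = ((-114112572721/4):ℝ) by norm_num] at h
    exact h.congr fun x => by rw [div_div, mul_comm (x^9) ((10:ℝ))]
  have hgg : ∀ x ∈ Set.Ioo (0:ℝ) 1, HasDerivAt (fun v : ℝ => v^10) ((10:ℝ)*x^9) x := by
    intro x _; have h := hasDerivAt_pow 10 x; norm_num at h ⊢; exact h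
  have hga : Tendsto (fun v : ℝ => v^10) (nhdsWithin 0 (Set.Ioi 0)) (nhds 0) := by
    have h := ((continuous_pow 10).tendsto (0:ℝ)).mono_left (nhdsWithin_le_nhds (s := Set.Ioi 0))
    norm_num at h; exact h
  exact HasDerivAt.lhopital_zero_right_on_Ioo one_pos (fun x _ => fM4_deriv x) hgg
    (fun x hx => by have h1 : (0:ℝ) < x := hx.1; positivity) fM4_tends hga hdiv

lemma fM3_lim : Tendsto (fun v => fM3 v / v^11) (nhdsWithin 0 (Set.Ioi 0)) (nhds ((-114112572721/44) : ℝ)) := by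
  have hdiv : Tendsto (fun x => fM4 x / ((11:ℝ)*x^10)) (nhdsWithin 0 (Set.Ioi 0)) (nhds ((-114112572721/44) : ℝ)) := by
    have h := fM4_lim.div_const (11:ℝ)
    rw [show ((-114112572721/4):ℝ)/11 = ((-114112572721/44):ℝ) by norm_num] at h
    exact h.congr fun x => by rw [div_div, mul_comm (x^10) ((11:ℝ))]
  have hgg : ∀ x ∈ Set.Ioo (0:ℝ) 1, HasDerivAt (fun v : ℝ => v^11) ((11:ℝ)*x^10) x := by
    intro x _; have h := hasDerivAt_pow 11 x; norm_num at h ⊢; exact h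
  have hga : Tendsto (fun v : ℝ => v^11) (nhdsWithin 0 (Set.Ioi 0)) (nhds 0) := by
    have h := ((continuous_pow 11).tendsto (0:ℝ)).mono_left (nhdsWithin_le_nhds (s := Set.Ioi 0))
    norm_num at h; exact h
  exact HasDerivAt.lhopital_zero_right_on_Ioo one_pos (fun x _ => fM3_deriv x) hgg
    (fun x hx => by have h1 : (0:ℝ) < x := hx.1; positivity) fM3_tends hga hdiv

lemma fM2_lim : Tendsto (fun v => fM2 v / v^12) (nhdsWithin 0 (Set.Ioi 0)) (nhds ((-114112572721/528) : ℝ)) := by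
  have hdiv : Tendsto (fun x => fM3 x / ((12:ℝ)*x^11)) (nhdsWithin 0 (Set.Ioi 0)) (nhds ((-114112572721/528) : ℝ)) := by
    have h := fM3_lim.div_const (12:ℝ)
    rw [show ((-114112572721/44):ℝ)/12 = ((-114112572721/528):ℝ) by norm_num] at h
    exact h.congr fun x => by rw [div_div, mul_comm (x^11) ((12:ℝ))]
  have hgg : ∀ x ∈ Set.Ioo (0:ℝ) 1, HasDerivAt (fun v : ℝ => v^12) ((12:ℝ)*x^11) x := by
    intro x _; have h := hasDerivAt_pow 12 x; norm_num at h ⊢; exact h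
  have hga : Tendsto (fun v : ℝ => v^12) (nhdsWithin 0 (Set.Ioi 0)) (nhds 0) := by
    have h := ((continuous_pow 12).tendsto (0:ℝ)).mono_left (nhdsWithin_le_nhds (s := Set.Ioi 0))
    norm_num at h; exact h
  exact HasDerivAt.lhopital_zero_right_on_Ioo one_pos (fun x _ => fM2_deriv x) hgg
    (fun x hx => by have h1 : (0:ℝ) < x := hx.1; positivity) fM2_tends hga hdiv

lemma fM1_lim : Tendsto (fun v => fM1 v / v^13) (nhdsWithin 0 (Set.Ioi 0)) (nhds ((-114112572721/6864) : ℝ)) := by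
  have hdiv : Tendsto (fun x => fM2 x / ((13:ℝ)*x^12)) (nhdsWithin 0 (Set.Ioi 0)) (nhds ((-114112572721/6864) : ℝ)) := by
    have h := fM2_lim.div_const (13:ℝ)
    rw [show ((-114112572721/528):ℝ)/13 = ((-114112572721/6864):ℝ) by norm_num] at h
    exact h.congr fun x => by rw [div_div, mul_comm (x^12) ((13:ℝ))]
  have hgg : ∀ x ∈ Set.Ioo (0:ℝ) 1, HasDerivAt (fun v : ℝ => v^13) ((13:ℝ)*x^12) x := by
    intro x _; have h := hasDerivAt_pow 13 x; norm_num at h ⊢; exact h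
  have hga : Tendsto (fun v : ℝ => v^13) (nhdsWithin 0 (Set.Ioi 0)) (nhds 0) := by
    have h := ((continuous_pow 13).tendsto (0:ℝ)).mono_left (nhdsWithin_le_nhds (s := Set.Ioi 0))
    norm_num at h; exact h
  exact HasDerivAt.lhopital_zero_right_on_Ioo one_pos (fun x _ => fM1_deriv x) hgg
    (fun x hx => by have h1 : (0:ℝ) < x := hx.1; positivity) fM1_tends hga hdiv

lemma fM0_lim : Tendsto (fun v => fM0 v / v^14) (nhdsWithin 0 (Set.Ioi 0)) (nhds ((-16301796103/13728) : ℝ)) := by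
  have hdiv : Tendsto (fun x => fM1 x / ((14:ℝ)*x^13)) (nhdsWithin 0 (Set.Ioi 0)) (nhds ((-16301796103/13728) : ℝ)) := by
    have h := fM1_lim.div_const (14:ℝ)
    rw [show ((-114112572721/6864):ℝ)/14 = ((-16301796103/13728):ℝ) by norm_num] at h
    exact h.congr fun x => by rw [div_div, mul_comm (x^13) ((14:ℝ))]
  have hgg : ∀ x ∈ Set.Ioo (0:ℝ) 1, HasDerivAt (fun v : ℝ => v^14) ((14:ℝ)*x^13) x := by
    intro x _; have h := hasDerivAt_pow 14 x; norm_num at h ⊢; exact h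
  have hga : Tendsto (fun v : ℝ => v^14) (nhdsWithin 0 (Set.Ioi 0)) (nhds 0) := by
    have h := ((continuous_pow 14).tendsto (0:ℝ)).mono_left (nhdsWithin_le_nhds (s := Set.Ioi 0))
    norm_num at h; exact h
  exact HasDerivAt.lhopital_zero_right_on_Ioo one_pos (fun x _ => fM0_deriv x) hgg
    (fun x hx => by have h1 : (0:ℝ) < x := hx.1; positivity) fM0_tends hga hdiv

lemma pfb5_eq1 (v : ℝ) (hv : v ∈ Set.Ioo (0:ℝ) 1) :
    pfb5 v = (fN0 v / v^12) / (103219200*(Real.sin (v/2)/v)^10) := by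
  have hv0 : v ≠ 0 := ne_of_gt hv.1
  have hs : Real.sin (v/2) ≠ 0 := by
    have h2 : (0:ℝ) < v/2 := by linarith [hv.1]
    have h3 : v/2 < Real.pi := by linarith [Real.pi_gt_three, hv.2]
    exact ne_of_gt (Real.sin_pos_of_pos_of_lt_pi h2 h3)
  unfold pfb5 fN0 Tm
  simp only [zero_mul, one_mul, Real.cos_zero, Real.sin_zero]
  rw [div_pow]
  field_simp
  ring

lemma pfb5_eq2 (v : ℝ) (hv : v ∈ Set.Ioo (0:ℝ) 1) :
    (pfb5 v - 50277247/985600) / v^2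
      = (fM0 v / v^14) / (103219200*(Real.sin (v/2)/v)^10) := by
  have hv0 : v ≠ 0 := ne_of_gt hv.1
  have hs : Real.sin (v/2) ≠ 0 := by
    have h2 : (0:ℝ) < v/2 := by linarith [hv.1]
    have h3 : v/2 < Real.pi := by linarith [Real.pi_gt_three, hv.2]
    exact ne_of_gt (Real.sin_pos_of_pos_of_lt_pi h2 h3)
  have hkey : Real.sin (v/2)^10 = (126 - 210*Real.cos v + 120*Real.cos (2*v)
      - 45*Real.cos (3*v) + 10*Real.cos (4*v) - Real.cos (5*v))/512 := by
    rw [keyident v]; ring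
  have hb : (126 - 210*Real.cos v + 120*Real.cos (2*v) - 45*Real.cos (3*v)
      + 10*Real.cos (4*v) - Real.cos (5*v)) ≠ 0 := by
    rw [keyident v]; exact mul_ne_zero (by norm_num) (pow_ne_zero _ hs)
  unfold pfb5 fM0 Tm
  simp only [zero_mul, one_mul, Real.cos_zero, Real.sin_zero]
  rw [div_pow, hkey]
  generalize hB : (126 - 210*Real.cos v + 120*Real.cos (2*v) - 45*Real.cos (3*v)
      + 10*Real.cos (4*v) - Real.cos (5*v)) = B at hb ⊢
  field_simp
  subst hB
  ring

lemma den_lim : Tendsto (fun v : ℝ => 103219200*(Real.sin (v/2)/v)^10)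
    (nhdsWithin 0 (Set.Ioi 0)) (nhds 100800) := by
  have h := (sinc_half.pow 10).const_mul (103219200:ℝ)
  norm_num at h
  exact h

theorem pfd0_b5_limit :
    Tendsto pfb5 (nhdsWithin 0 (Set.Ioi 0)) (nhds (50277247 / 985600)) ∧
    Tendsto (fun v : ℝ => (pfb5 v - (50277247 / 985600)) / v ^ 2)
      (nhdsWithin 0 (Set.Ioi 0)) (nhds (-16301796103 / 1383782400)) := by
  have hmem : Set.Ioo (0:ℝ) 1 ∈ nhdsWithin 0 (Set.Ioi 0) :=
    Ioo_mem_nhdsGT_of_mem (Set.left_mem_Ico.2 one_pos)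
  constructor
  · have hq := fN0_lim.div den_lim (by norm_num : (100800:ℝ) ≠ 0)
    rw [show (452495223/88 : ℝ)/100800 = 50277247/985600 by norm_num] at hq
    refine hq.congr' ?_
    filter_upwards [hmem] with v hv
    exact (pfb5_eq1 v hv).symm
  · have hq := fM0_lim.div den_lim (by norm_num : (100800:ℝ) ≠ 0)
    rw [show ((-16301796103)/13728 : ℝ)/100800 = -16301796103/1383782400 by norm_num] at hq
    refine hq.congr' ?_
    filter_upwards [hmem] with v hv
    exact (pfb5_eq2 v hv).symm
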